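/- arXiv:2309.17306 — 5 statements merged into one kernel-verified Lean document; each statement's English description precedes it below -/
import Mathlib

section
/- Let d ≥ 1, let ν be a σ-finite measure on ℝ^d, and let c_ν > 0 be such that ∫_{B(0,1)} ‖z‖² dν(z) < ∞ and ∫_{‖z‖≥1} exp(c_ν‖z‖) dν(z) < ∞. Let c_γ, M > 0, let a ∈ ℝ with |a| ≤ M, and let w ∈ ℝ^d with ‖w‖ ≤ c_γ. Then for every y > 0 with 2 y |a| c_γ ≤ c_ν, one has ∫_{ℝ^d} (exp(y a ⟨w, z⟩) − 1 − y a ⟨w, z⟩) dν(z) ≤ c₁ y² a², where c₁ := c_γ² ( (1/2) exp(c_ν/2) ∫_{B(0,1)} ‖z‖² dν(z) + 4 c_ν^{−2} ∫_{‖z‖≥1} exp(c_ν‖z‖) dν(z) ). -/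
open MeasureTheory

set_option maxHeartbeats 1000000

lemma exp_quad_aux (t : ℝ) : Real.exp t - 1 - t ≤ t ^ 2 / 2 * Real.exp |t| := by
  have h0 : ∀ x : ℝ, Real.exp x = ∑' n : ℕ, x ^ n / n.factorial := by
    intro x
    rw [Real.exp_eq_exp_ℝ, NormedSpace.exp_eq_tsum_div]
  have hs := Real.summable_pow_div_factorial t
  have hs1 : Summable (fun n : ℕ => t ^ (n + 1) / (n+1).factorial) :=
    (summable_nat_add_iff 1).2 hs
  have hs2 : Summable (fun n : ℕ => t ^ (n + 2) / (n+2).factorial) :=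
    (summable_nat_add_iff 2).2 hs
  have hrepr : Real.exp t - 1 - t = ∑' n : ℕ, t ^ (n + 2) / (n+2).factorial := by
    rw [h0 t, Summable.tsum_eq_zero_add hs, Summable.tsum_eq_zero_add hs1]
    norm_num
  have hterm : ∀ n : ℕ, t ^ (n + 2) / (n+2).factorial ≤ t ^ 2 / 2 * (|t| ^ n / n.factorial) := by
    intro n
    have hfac : (2 * n.factorial : ℝ) ≤ ((n+2).factorial : ℝ) := by
      have : 2 * n.factorial ≤ (n+2).factorial := by
        calc 2 * n.factorial ≤ (n + 2) * n.factorial := Nat.mul_le_mul_right _ (by omega)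
          _ ≤ (n + 2) * (n+1).factorial := Nat.mul_le_mul_left _ (Nat.factorial_le (by omega))
          _ = (n+2).factorial := rfl
      exact_mod_cast this
    have h1 : t ^ (n + 2) ≤ |t| ^ (n + 2) := by
      calc t ^ (n + 2) ≤ |t ^ (n + 2)| := le_abs_self _
        _ = |t| ^ (n + 2) := abs_pow t _
    calc t ^ (n + 2) / (n+2).factorial ≤ |t| ^ (n + 2) / (n+2).factorial := by
          have : (0:ℝ) ≤ (n+2).factorial := by positivity
          exact div_le_div_of_nonneg_right h1 this
        _ ≤ |t| ^ (n + 2) / (2 * n.factorial) := by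
          apply div_le_div_of_nonneg_left (by positivity) (by positivity) hfac
        _ = t ^ 2 / 2 * (|t| ^ n / n.factorial) := by
          rw [pow_add, sq_abs]
          ring
  have hsum2 : Summable (fun n : ℕ => t ^ 2 / 2 * (|t| ^ n / n.factorial)) :=
    (Real.summable_pow_div_factorial |t|).mul_left _
  calc Real.exp t - 1 - t = ∑' n : ℕ, t ^ (n + 2) / (n+2).factorial := hrepr
    _ ≤ ∑' n : ℕ, t ^ 2 / 2 * (|t| ^ n / n.factorial) := Summable.tsum_le_tsum hterm hs2 hsum2
    _ = t ^ 2 / 2 * Real.exp |t| := by rw [tsum_mul_left, ← h0]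

lemma sq_half_le_exp {x : ℝ} (hx : 0 ≤ x) : x ^ 2 / 2 ≤ Real.exp x := by
  have hs := Real.summable_pow_div_factorial x
  have h0 : Real.exp x = ∑' n : ℕ, x ^ n / n.factorial := by
    rw [Real.exp_eq_exp_ℝ, NormedSpace.exp_eq_tsum_div]
  have := Summable.le_tsum hs 2 (fun i _ => by positivity)
  rw [← h0] at this
  norm_num at this
  linarith

/-- Pointwise compensator bound under an exponential moment assumption on the Lévy measure. -/
theorem compensator_bound_exponential_moment
    {d : ℕ} (hd : 1 ≤ d)
    (ν : Measure (EuclideanSpace ℝ (Fin d))) [SigmaFinite ν]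
    (cν cγ M : ℝ) (hcν : 0 < cν) (hcγ : 0 < cγ) (hM : 0 < M)
    (h2 : IntegrableOn (fun z => ‖z‖ ^ 2) (Metric.ball (0 : EuclideanSpace ℝ (Fin d)) 1) ν)
    (hexp : IntegrableOn (fun z => Real.exp (cν * ‖z‖))
      {z : EuclideanSpace ℝ (Fin d) | 1 ≤ ‖z‖} ν)
    (a : ℝ) (ha : |a| ≤ M)
    (w : EuclideanSpace ℝ (Fin d)) (hw : ‖w‖ ≤ cγ)
    (y : ℝ) (hy : 0 < y) (hy2 : 2 * y * |a| * cγ ≤ cν) :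
    ∫⁻ z, ENNReal.ofReal
        (Real.exp (y * a * (inner ℝ w z : ℝ)) - 1 - y * a * (inner ℝ w z : ℝ)) ∂ν
      ≤ ENNReal.ofReal
        (cγ ^ 2 *
            ((1 / 2) * Real.exp (cν / 2) *
                (∫ z in Metric.ball (0 : EuclideanSpace ℝ (Fin d)) 1, ‖z‖ ^ 2 ∂ν)
              + 4 / cν ^ 2 *
                (∫ z in {z : EuclideanSpace ℝ (Fin d) | 1 ≤ ‖z‖}, Real.exp (cν * ‖z‖) ∂ν))
          * y ^ 2 * a ^ 2) := by
  classical
  set B : Set (EuclideanSpace ℝ (Fin d)) := Metric.ball (0 : EuclideanSpace ℝ (Fin d)) 1 with hB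
  set S : Set (EuclideanSpace ℝ (Fin d)) := {z : EuclideanSpace ℝ (Fin d) | 1 ≤ ‖z‖} with hS
  set C2 : ℝ := 1 / 2 * Real.exp (cν / 2) * cγ ^ 2 * y ^ 2 * a ^ 2 with hC2
  set C3 : ℝ := cγ ^ 2 * (4 / cν ^ 2) * y ^ 2 * a ^ 2 with hC3
  have hya : 0 ≤ y * |a| := by positivity
  -- basic estimates on t = y * a * ⟪w, z⟫
  have hkey : ∀ z : EuclideanSpace ℝ (Fin d), |y * a * (inner ℝ w z : ℝ)| ≤ cν / 2 * ‖z‖ ∧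
      (y * a * (inner ℝ w z : ℝ)) ^ 2 ≤ y ^ 2 * a ^ 2 * cγ ^ 2 * ‖z‖ ^ 2 := by
    intro z
    have hin : |(inner ℝ w z : ℝ)| ≤ cγ * ‖z‖ :=
      (abs_real_inner_le_norm w z).trans
        (mul_le_mul_of_nonneg_right hw (norm_nonneg z))
    have habs : |y * a * (inner ℝ w z : ℝ)| = y * |a| * |(inner ℝ w z : ℝ)| := by
      rw [abs_mul, abs_mul, abs_of_pos hy]
    have h1 : |y * a * (inner ℝ w z : ℝ)| ≤ y * |a| * (cγ * ‖z‖) := by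
      rw [habs]; exact mul_le_mul_of_nonneg_left hin hya
    constructor
    · refine h1.trans ?_
      have := norm_nonneg z
      nlinarith
    · calc (y * a * (inner ℝ w z : ℝ)) ^ 2
          = |y * a * (inner ℝ w z : ℝ)| * |y * a * (inner ℝ w z : ℝ)| := by
            rw [← sq_abs]; ring
        _ ≤ (y * |a| * (cγ * ‖z‖)) * (y * |a| * (cγ * ‖z‖)) :=
            mul_self_le_mul_self (abs_nonneg _) h1
        _ = y ^ 2 * |a| ^ 2 * cγ ^ 2 * ‖z‖ ^ 2 := by ring
        _ = y ^ 2 * a ^ 2 * cγ ^ 2 * ‖z‖ ^ 2 := by rw [sq_abs]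
  have hnn : ∀ z : EuclideanSpace ℝ (Fin d), 0 ≤ Real.exp (y * a * (inner ℝ w z : ℝ)) - 1 - y * a * (inner ℝ w z : ℝ) := by
    intro z
    have := Real.add_one_le_exp (y * a * (inner ℝ w z : ℝ))
    linarith
  -- pointwise bound on the ball
  have hball : ∀ z ∈ B, Real.exp (y * a * (inner ℝ w z : ℝ)) - 1 - y * a * (inner ℝ w z : ℝ)
      ≤ C2 * ‖z‖ ^ 2 := by
    intro z hz
    obtain ⟨ht1, ht2⟩ := hkey z
    have hzlt : ‖z‖ < 1 := by simpa [hB, Metric.mem_ball, dist_zero_right] using hz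
    have hexple : Real.exp |y * a * (inner ℝ w z : ℝ)| ≤ Real.exp (cν / 2) := by
      apply Real.exp_le_exp.2
      refine ht1.trans ?_
      nlinarith [norm_nonneg z]
    calc Real.exp (y * a * (inner ℝ w z : ℝ)) - 1 - y * a * (inner ℝ w z : ℝ)
        ≤ (y * a * (inner ℝ w z : ℝ)) ^ 2 / 2 * Real.exp |y * a * (inner ℝ w z : ℝ)| :=
          exp_quad_aux _
      _ ≤ (y ^ 2 * a ^ 2 * cγ ^ 2 * ‖z‖ ^ 2) / 2 * Real.exp (cν / 2) := by
          apply mul_le_mul (by linarith) hexple (Real.exp_pos _).le (by positivity)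
      _ = C2 * ‖z‖ ^ 2 := by rw [hC2]; ring
  -- pointwise bound outside the ball
  have hout : ∀ z ∈ S, Real.exp (y * a * (inner ℝ w z : ℝ)) - 1 - y * a * (inner ℝ w z : ℝ)
      ≤ C3 * Real.exp (cν * ‖z‖) := by
    intro z hz
    obtain ⟨ht1, ht2⟩ := hkey z
    have hexple : Real.exp |y * a * (inner ℝ w z : ℝ)| ≤ Real.exp (cν / 2 * ‖z‖) :=
      Real.exp_le_exp.2 ht1
    have hz2 : ‖z‖ ^ 2 ≤ 8 / cν ^ 2 * Real.exp (cν / 2 * ‖z‖) := by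
      have hx := sq_half_le_exp (x := cν / 2 * ‖z‖) (by positivity)
      have h8 : (0:ℝ) ≤ 8 / cν ^ 2 := by positivity
      have hmul := mul_le_mul_of_nonneg_left hx h8
      calc ‖z‖ ^ 2 = 8 / cν ^ 2 * ((cν / 2 * ‖z‖) ^ 2 / 2) := by
            field_simp; ring
        _ ≤ 8 / cν ^ 2 * Real.exp (cν / 2 * ‖z‖) := hmul
    have hee : Real.exp (cν / 2 * ‖z‖) * Real.exp (cν / 2 * ‖z‖) = Real.exp (cν * ‖z‖) := by
      rw [← Real.exp_add]; ring_nf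
    calc Real.exp (y * a * (inner ℝ w z : ℝ)) - 1 - y * a * (inner ℝ w z : ℝ)
        ≤ (y * a * (inner ℝ w z : ℝ)) ^ 2 / 2 * Real.exp |y * a * (inner ℝ w z : ℝ)| :=
          exp_quad_aux _
      _ ≤ (y ^ 2 * a ^ 2 * cγ ^ 2 * ‖z‖ ^ 2) / 2 * Real.exp (cν / 2 * ‖z‖) := by
          apply mul_le_mul (by linarith) hexple (Real.exp_pos _).le (by positivity)
      _ ≤ (y ^ 2 * a ^ 2 * cγ ^ 2 * (8 / cν ^ 2 * Real.exp (cν / 2 * ‖z‖))) / 2 *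
            Real.exp (cν / 2 * ‖z‖) := by
          apply mul_le_mul_of_nonneg_right _ (Real.exp_pos _).le
          gcongr
      _ = y ^ 2 * a ^ 2 * cγ ^ 2 * (4 / cν ^ 2) *
            (Real.exp (cν / 2 * ‖z‖) * Real.exp (cν / 2 * ‖z‖)) := by ring
      _ = C3 * Real.exp (cν * ‖z‖) := by rw [hee, hC3]; ring
  -- split the integral
  have hBmeas : MeasurableSet B := measurableSet_ball
  have hcompl : Bᶜ = S := by
    ext z
    simp [hB, hS, Metric.mem_ball, dist_zero_right, not_lt]
  have hI2 : 0 ≤ ∫ z in B, ‖z‖ ^ 2 ∂ν :=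
    setIntegral_nonneg hBmeas fun z _ => by positivity
  have hSmeas : MeasurableSet S := hcompl ▸ hBmeas.compl
  have hIE : 0 ≤ ∫ z in S, Real.exp (cν * ‖z‖) ∂ν :=
    setIntegral_nonneg hSmeas fun z _ => (Real.exp_pos _).le
  have e1 : ∫⁻ z in B, ENNReal.ofReal
        (Real.exp (y * a * (inner ℝ w z : ℝ)) - 1 - y * a * (inner ℝ w z : ℝ)) ∂ν
      ≤ ENNReal.ofReal (C2 * ∫ z in B, ‖z‖ ^ 2 ∂ν) := by
    have hInt : IntegrableOn (fun z : EuclideanSpace ℝ (Fin d) => C2 * ‖z‖ ^ 2) B ν := h2.const_mul C2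
    calc ∫⁻ z in B, ENNReal.ofReal
          (Real.exp (y * a * (inner ℝ w z : ℝ)) - 1 - y * a * (inner ℝ w z : ℝ)) ∂ν
        ≤ ∫⁻ z in B, ENNReal.ofReal (C2 * ‖z‖ ^ 2) ∂ν :=
          setLIntegral_mono' hBmeas fun z hz => ENNReal.ofReal_le_ofReal (hball z hz)
      _ = ENNReal.ofReal (∫ z in B, C2 * ‖z‖ ^ 2 ∂ν) :=
          (ofReal_integral_eq_lintegral_ofReal hInt
            (Filter.Eventually.of_forall fun z => by positivity)).symm
      _ = ENNReal.ofReal (C2 * ∫ z in B, ‖z‖ ^ 2 ∂ν) := by rw [integral_const_mul]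
  have e2 : ∫⁻ z in S, ENNReal.ofReal
        (Real.exp (y * a * (inner ℝ w z : ℝ)) - 1 - y * a * (inner ℝ w z : ℝ)) ∂ν
      ≤ ENNReal.ofReal (C3 * ∫ z in S, Real.exp (cν * ‖z‖) ∂ν) := by
    have hInt : IntegrableOn (fun z : EuclideanSpace ℝ (Fin d) => C3 * Real.exp (cν * ‖z‖)) S ν := hexp.const_mul C3
    calc ∫⁻ z in S, ENNReal.ofReal
          (Real.exp (y * a * (inner ℝ w z : ℝ)) - 1 - y * a * (inner ℝ w z : ℝ)) ∂ν
        ≤ ∫⁻ z in S, ENNReal.ofReal (C3 * Real.exp (cν * ‖z‖)) ∂ν :=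
          setLIntegral_mono' hSmeas fun z hz => ENNReal.ofReal_le_ofReal (hout z hz)
      _ = ENNReal.ofReal (∫ z in S, C3 * Real.exp (cν * ‖z‖) ∂ν) :=
          (ofReal_integral_eq_lintegral_ofReal hInt
            (Filter.Eventually.of_forall fun z => by positivity)).symm
      _ = ENNReal.ofReal (C3 * ∫ z in S, Real.exp (cν * ‖z‖) ∂ν) := by rw [integral_const_mul]
  have hC2nn : 0 ≤ C2 := by rw [hC2]; positivity
  have hC3nn : 0 ≤ C3 := by rw [hC3]; positivity
  calc ∫⁻ z, ENNReal.ofReal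
        (Real.exp (y * a * (inner ℝ w z : ℝ)) - 1 - y * a * (inner ℝ w z : ℝ)) ∂ν
      = (∫⁻ z in B, ENNReal.ofReal
          (Real.exp (y * a * (inner ℝ w z : ℝ)) - 1 - y * a * (inner ℝ w z : ℝ)) ∂ν)
        + ∫⁻ z in S, ENNReal.ofReal
          (Real.exp (y * a * (inner ℝ w z : ℝ)) - 1 - y * a * (inner ℝ w z : ℝ)) ∂ν := by
        rw [← hcompl, lintegral_add_compl _ hBmeas]
    _ ≤ ENNReal.ofReal (C2 * ∫ z in B, ‖z‖ ^ 2 ∂ν)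
        + ENNReal.ofReal (C3 * ∫ z in S, Real.exp (cν * ‖z‖) ∂ν) := add_le_add e1 e2
    _ = ENNReal.ofReal ((C2 * ∫ z in B, ‖z‖ ^ 2 ∂ν)
        + C3 * ∫ z in S, Real.exp (cν * ‖z‖) ∂ν) :=
        (ENNReal.ofReal_add (mul_nonneg hC2nn hI2) (mul_nonneg hC3nn hIE)).symm
    _ ≤ ENNReal.ofReal
        (cγ ^ 2 *
            ((1 / 2) * Real.exp (cν / 2) *
                (∫ z in Metric.ball (0 : EuclideanSpace ℝ (Fin d)) 1, ‖z‖ ^ 2 ∂ν)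
              + 4 / cν ^ 2 *
                (∫ z in {z : EuclideanSpace ℝ (Fin d) | 1 ≤ ‖z‖}, Real.exp (cν * ‖z‖) ∂ν))
          * y ^ 2 * a ^ 2) := by
        apply ENNReal.ofReal_le_ofReal
        apply le_of_eq
        rw [hC2, hC3]
        ring
end

section
/- Let d ≥ 1, let ν be a σ-finite measure on ℝ^d, and let c_ν > 0 be such that ∫_{B(0,1)} ‖z‖² dν(z) < ∞ and ∫_{‖z‖≥1} exp(c_ν‖z‖) dν(z) < ∞. Let T, M, c_γ > 0, let f : [0,T] → ℝ be measurable with |f(s)| ≤ M for all s, and let G : [0,T] → ℝ^d be measurable with ‖G(s)‖ ≤ c_γ for all s. Then for every y with 0 < y ≤ c_ν (2 M c_γ)^{−1}, ∫₀^T ∫_{ℝ^d} (exp(y f(s) ⟨G(s), z⟩) − 1 − y f(s) ⟨G(s), z⟩) dν(z) ds ≤ c₁ y² ∫₀^T f(s)² ds, where c₁ := c_γ² ( (1/2) exp(c_ν/2) ∫_{B(0,1)} ‖z‖² dν(z) + 4 c_ν^{−2} ∫_{‖z‖≥1} exp(c_ν‖z‖) dν(z) ). -/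
open MeasureTheory

set_option maxHeartbeats 1000000 in
lemma exp_series_bound {t : ℝ} (ht : 0 ≤ t) :
    Real.exp t - 1 - t ≤ t ^ 2 / 2 * Real.exp t := by
  have hsum : Summable (fun n : ℕ => t ^ n / n.factorial) :=
    Real.summable_pow_div_factorial t
  have hexp : Real.exp t = ∑' n : ℕ, t ^ n / n.factorial := by
    rw [Real.exp_eq_exp_ℝ, NormedSpace.exp_eq_tsum_div]
  have hsum1 : Summable (fun n : ℕ => t ^ (n + 1) / (n + 1).factorial) :=
    (summable_nat_add_iff 1).2 hsum
  have hsum2 : Summable (fun n : ℕ => t ^ (n + 2) / (n + 2).factorial) :=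
    (summable_nat_add_iff 2).2 hsum
  have h0 : ∑' n : ℕ, t ^ n / n.factorial
      = 1 + (t + ∑' n : ℕ, t ^ (n + 2) / (n + 2).factorial) := by
    rw [Summable.tsum_eq_zero_add hsum]
    simp only [pow_zero, Nat.factorial_zero, Nat.cast_one, div_one]
    congr 1
    rw [Summable.tsum_eq_zero_add hsum1]
    simp [Nat.factorial_one]
  have hshift : Real.exp t - 1 - t = ∑' n : ℕ, t ^ (n + 2) / (n + 2).factorial := by
    rw [hexp, h0]; ring
  rw [hshift]
  have hbound : ∀ n : ℕ, t ^ (n + 2) / (n + 2).factorial ≤ t ^ 2 / 2 * (t ^ n / n.factorial) := by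
    intro n
    have h1 : (2:ℝ) * n.factorial ≤ ((n + 2).factorial : ℝ) := by
      have h2 : 2 * n.factorial ≤ (n + 2).factorial := by
        rw [Nat.factorial_succ, Nat.factorial_succ]
        exact Nat.mul_le_mul (by omega) (Nat.le_mul_of_pos_left _ n.succ_pos)
      exact_mod_cast h2
    have heq : t ^ 2 / 2 * (t ^ n / n.factorial) = t ^ (n + 2) / (2 * n.factorial) := by
      rw [div_mul_div_comm, ← pow_add]
      ring_nf
    rw [heq]
    gcongr
  calc ∑' n : ℕ, t ^ (n + 2) / (n + 2).factorial
      ≤ ∑' n : ℕ, t ^ 2 / 2 * (t ^ n / n.factorial) :=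
        Summable.tsum_le_tsum hbound hsum2 (hsum.mul_left _)
    _ = t ^ 2 / 2 * Real.exp t := by rw [tsum_mul_left, hexp]

lemma exp_key (x : ℝ) : Real.exp x - 1 - x ≤ x ^ 2 / 2 * Real.exp |x| := by
  have h1 : Real.exp x - 1 - x ≤ Real.exp |x| - 1 - |x| := by
    rcases le_or_gt 0 x with h | h
    · rw [abs_of_nonneg h]
    · rw [abs_of_neg h]
      have hs : Real.sinh x < x := Real.sinh_lt_self_iff.2 h
      rw [Real.sinh_eq] at hs
      rw [Real.exp_neg] at *
      nlinarith [Real.exp_pos x]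
  calc Real.exp x - 1 - x ≤ Real.exp |x| - 1 - |x| := h1
    _ ≤ |x| ^ 2 / 2 * Real.exp |x| := exp_series_bound (abs_nonneg x)
    _ = x ^ 2 / 2 * Real.exp |x| := by rw [sq_abs]

set_option maxHeartbeats 1000000 in
/-- Lemma A.2 of the paper, stated pathwise: quadratic compensator bound under an
exponential moment assumption on the Lévy measure. -/
theorem compensator_bound_exponential_moment_pathwise
    {d : ℕ} (hd : 1 ≤ d)
    (ν : Measure (EuclideanSpace ℝ (Fin d))) [SigmaFinite ν]
    (cν : ℝ) (hcν : 0 < cν)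
    (h2 : IntegrableOn (fun z => ‖z‖ ^ 2) (Metric.ball (0 : EuclideanSpace ℝ (Fin d)) 1) ν)
    (hexp : IntegrableOn (fun z => Real.exp (cν * ‖z‖))
      {z : EuclideanSpace ℝ (Fin d) | 1 ≤ ‖z‖} ν)
    (T M cγ : ℝ) (hT : 0 < T) (hM : 0 < M) (hcγ : 0 < cγ)
    (f : ℝ → ℝ) (hf : Measurable f) (hfb : ∀ s ∈ Set.Icc (0 : ℝ) T, |f s| ≤ M)
    (G : ℝ → EuclideanSpace ℝ (Fin d)) (hG : Measurable G)
    (hGb : ∀ s ∈ Set.Icc (0 : ℝ) T, ‖G s‖ ≤ cγ)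
    (y : ℝ) (hy : 0 < y) (hy2 : y ≤ cν * (2 * M * cγ)⁻¹) :
    ∫⁻ s in Set.Icc (0 : ℝ) T,
        ∫⁻ z, ENNReal.ofReal
          (Real.exp (y * f s * (inner ℝ (G s) z : ℝ)) - 1 - y * f s * (inner ℝ (G s) z : ℝ)) ∂ν
      ≤ ENNReal.ofReal
        ((cγ ^ 2 *
            ((1 / 2) * Real.exp (cν / 2) *
                (∫ z in Metric.ball (0 : EuclideanSpace ℝ (Fin d)) 1, ‖z‖ ^ 2 ∂ν)
              + 4 / cν ^ 2 *
                (∫ z in {z : EuclideanSpace ℝ (Fin d) | 1 ≤ ‖z‖}, Real.exp (cν * ‖z‖) ∂ν)))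
          * y ^ 2 * ∫ s in Set.Icc (0 : ℝ) T, (f s) ^ 2) := by
  set B : Set (EuclideanSpace ℝ (Fin d)) := Metric.ball (0 : EuclideanSpace ℝ (Fin d)) 1
    with hBdef
  set S : Set (EuclideanSpace ℝ (Fin d)) := {z : EuclideanSpace ℝ (Fin d) | 1 ≤ ‖z‖}
    with hSdef
  have hBc : Bᶜ = S := by
    ext z
    simp [hBdef, hSdef, Metric.mem_ball, dist_zero_right, not_lt]
  set I₁ : ℝ := ∫ z in B, ‖z‖ ^ 2 ∂ν with hI₁
  set I₂ : ℝ := ∫ z in S, Real.exp (cν * ‖z‖) ∂ν with hI₂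
  have hI₁nn : 0 ≤ I₁ := setIntegral_nonneg measurableSet_ball (fun z _ => by positivity)
  have hmS : MeasurableSet S := measurableSet_le measurable_const measurable_norm
  have hI₂nn : 0 ≤ I₂ := setIntegral_nonneg hmS (fun z _ => (Real.exp_pos _).le)
  set K : ℝ := cγ ^ 2 * ((1 / 2) * Real.exp (cν / 2) * I₁ + 4 / cν ^ 2 * I₂) with hK
  have hKnn : 0 ≤ K := by positivity
  have hymc : y * (M * cγ) ≤ cν / 2 := by
    have h := mul_le_mul_of_nonneg_right hy2 (mul_pos hM hcγ).le
    have heq : cν * (2 * M * cγ)⁻¹ * (M * cγ) = cν / 2 := by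
      field_simp
    linarith [heq ▸ h]
  -- pointwise bounds
  have hpoint : ∀ s ∈ Set.Icc (0 : ℝ) T, ∀ z : EuclideanSpace ℝ (Fin d),
      |y * f s * (inner ℝ (G s) z : ℝ)| ≤ cν / 2 * ‖z‖ ∧
      (y * f s * (inner ℝ (G s) z : ℝ)) ^ 2 ≤ y ^ 2 * f s ^ 2 * (cγ ^ 2 * ‖z‖ ^ 2) := by
    intro s hs z
    have hfs := hfb s hs
    have hGs := hGb s hs
    have hip : |(inner ℝ (G s) z : ℝ)| ≤ cγ * ‖z‖ := by
      calc |(inner ℝ (G s) z : ℝ)| ≤ ‖G s‖ * ‖z‖ := abs_real_inner_le_norm _ _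
        _ ≤ cγ * ‖z‖ := mul_le_mul_of_nonneg_right hGs (norm_nonneg _)
    constructor
    · have : |y * f s * (inner ℝ (G s) z : ℝ)| = y * |f s| * |(inner ℝ (G s) z : ℝ)| := by
        rw [abs_mul, abs_mul, abs_of_pos hy]
      rw [this]
      calc y * |f s| * |(inner ℝ (G s) z : ℝ)| ≤ y * M * (cγ * ‖z‖) := by
            apply mul_le_mul (mul_le_mul_of_nonneg_left hfs hy.le) hip (abs_nonneg _)
            positivity
        _ = y * (M * cγ) * ‖z‖ := by ring
        _ ≤ cν / 2 * ‖z‖ := mul_le_mul_of_nonneg_right hymc (norm_nonneg _)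
    · have hip2 : (inner ℝ (G s) z : ℝ) ^ 2 ≤ (cγ * ‖z‖) ^ 2 := by
        rw [← sq_abs]
        exact pow_le_pow_left₀ (abs_nonneg _) hip 2
      nlinarith [sq_nonneg (y * f s), sq_nonneg (f s)]
  -- inner integral bound
  have inner_bound : ∀ s ∈ Set.Icc (0 : ℝ) T,
      (∫⁻ z, ENNReal.ofReal
          (Real.exp (y * f s * (inner ℝ (G s) z : ℝ)) - 1 - y * f s * (inner ℝ (G s) z : ℝ)) ∂ν)
        ≤ ENNReal.ofReal (K * y ^ 2 * f s ^ 2) := by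
    intro s hs
    set C₁ : ℝ := y ^ 2 * f s ^ 2 * cγ ^ 2 * (1 / 2 * Real.exp (cν / 2)) with hC₁
    set C₂ : ℝ := y ^ 2 * f s ^ 2 * cγ ^ 2 * (4 / cν ^ 2) with hC₂
    have hC₁nn : 0 ≤ C₁ := by positivity
    have hC₂nn : 0 ≤ C₂ := by positivity
    have hball : ∫⁻ z in B, ENNReal.ofReal
        (Real.exp (y * f s * (inner ℝ (G s) z : ℝ)) - 1 - y * f s * (inner ℝ (G s) z : ℝ)) ∂ν
        ≤ ENNReal.ofReal (C₁ * I₁) := by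
      have hmono : ∫⁻ z in B, ENNReal.ofReal
          (Real.exp (y * f s * (inner ℝ (G s) z : ℝ)) - 1 - y * f s * (inner ℝ (G s) z : ℝ)) ∂ν
          ≤ ∫⁻ z in B, ENNReal.ofReal (C₁ * ‖z‖ ^ 2) ∂ν := by
        apply setLIntegral_mono
        · exact (measurable_const.mul (measurable_norm.pow_const 2)).ennreal_ofReal
        · intro z hz
          apply ENNReal.ofReal_le_ofReal
          obtain ⟨habs, ha2⟩ := hpoint s hs z
          set a := y * f s * (inner ℝ (G s) z : ℝ) with ha
          have hz1 : ‖z‖ < 1 := by simpa [hBdef, Metric.mem_ball, dist_zero_right] using hz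
          have habs' : |a| ≤ cν / 2 := by nlinarith [norm_nonneg z, abs_nonneg a]
          calc Real.exp a - 1 - a ≤ a ^ 2 / 2 * Real.exp |a| := exp_key a
            _ ≤ a ^ 2 / 2 * Real.exp (cν / 2) :=
                mul_le_mul_of_nonneg_left (Real.exp_le_exp.2 habs') (by positivity)
            _ ≤ y ^ 2 * f s ^ 2 * (cγ ^ 2 * ‖z‖ ^ 2) / 2 * Real.exp (cν / 2) :=
                mul_le_mul_of_nonneg_right (by linarith) (Real.exp_pos _).le
            _ = C₁ * ‖z‖ ^ 2 := by rw [hC₁]; ring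
      refine hmono.trans (le_of_eq ?_)
      rw [← ofReal_integral_eq_lintegral_ofReal (h2.const_mul C₁)
        (Filter.Eventually.of_forall (fun z => by positivity)),
        integral_const_mul]
    have htail : ∫⁻ z in S, ENNReal.ofReal
        (Real.exp (y * f s * (inner ℝ (G s) z : ℝ)) - 1 - y * f s * (inner ℝ (G s) z : ℝ)) ∂ν
        ≤ ENNReal.ofReal (C₂ * I₂) := by
      have hmono : ∫⁻ z in S, ENNReal.ofReal
          (Real.exp (y * f s * (inner ℝ (G s) z : ℝ)) - 1 - y * f s * (inner ℝ (G s) z : ℝ)) ∂ν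
          ≤ ∫⁻ z in S, ENNReal.ofReal (C₂ * Real.exp (cν * ‖z‖)) ∂ν := by
        apply setLIntegral_mono
        · exact (measurable_const.mul ((measurable_norm.const_mul cν).exp)).ennreal_ofReal
        · intro z hz
          apply ENNReal.ofReal_le_ofReal
          obtain ⟨habs, ha2⟩ := hpoint s hs z
          set a := y * f s * (inner ℝ (G s) z : ℝ) with ha
          set w : ℝ := ‖z‖ with hw
          have hwnn : (0:ℝ) ≤ w := norm_nonneg z
          have hz2 : w ^ 2 ≤ 8 / cν ^ 2 * Real.exp (cν / 2 * w) := by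
            have hq := Real.quadratic_le_exp_of_nonneg
              (show (0:ℝ) ≤ cν / 2 * w by positivity)
            have h8 : cν ^ 2 * w ^ 2 ≤ 8 * Real.exp (cν / 2 * w) := by
              nlinarith [mul_nonneg hcν.le hwnn]
            rw [div_mul_eq_mul_div, le_div_iff₀ (by positivity : (0:ℝ) < cν ^ 2)]
            nlinarith
          have h1 : Real.exp a - 1 - a ≤ a ^ 2 / 2 * Real.exp (cν / 2 * w) :=
            (exp_key a).trans (mul_le_mul_of_nonneg_left (Real.exp_le_exp.2 habs)
              (by positivity))
          have h3 : a ^ 2 / 2 * Real.exp (cν / 2 * w)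
              ≤ y ^ 2 * f s ^ 2 * (cγ ^ 2 * w ^ 2) / 2 * Real.exp (cν / 2 * w) :=
            mul_le_mul_of_nonneg_right (by linarith) (Real.exp_pos _).le
          have h4 : y ^ 2 * f s ^ 2 * (cγ ^ 2 * w ^ 2) / 2 * Real.exp (cν / 2 * w)
              ≤ y ^ 2 * f s ^ 2 * (cγ ^ 2 * (8 / cν ^ 2 * Real.exp (cν / 2 * w))) / 2
                  * Real.exp (cν / 2 * w) := by
            apply mul_le_mul_of_nonneg_right _ (Real.exp_pos _).le
            have hc : (0:ℝ) ≤ y ^ 2 * f s ^ 2 * cγ ^ 2 / 2 := by positivity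
            nlinarith [mul_le_mul_of_nonneg_left hz2 hc]
          have h5 : y ^ 2 * f s ^ 2 * (cγ ^ 2 * (8 / cν ^ 2 * Real.exp (cν / 2 * w))) / 2
              * Real.exp (cν / 2 * w) = C₂ * Real.exp (cν * w) := by
            rw [hC₂, show cν * w = cν / 2 * w + cν / 2 * w by ring, Real.exp_add]
            ring
          linarith
      refine hmono.trans (le_of_eq ?_)
      rw [← ofReal_integral_eq_lintegral_ofReal (hexp.const_mul C₂)
        (Filter.Eventually.of_forall (fun z => by positivity)),
        integral_const_mul]
    calc ∫⁻ z, ENNReal.ofReal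
          (Real.exp (y * f s * (inner ℝ (G s) z : ℝ)) - 1 - y * f s * (inner ℝ (G s) z : ℝ)) ∂ν
        = (∫⁻ z in B, ENNReal.ofReal
            (Real.exp (y * f s * (inner ℝ (G s) z : ℝ)) - 1 - y * f s * (inner ℝ (G s) z : ℝ)) ∂ν)
          + ∫⁻ z in Bᶜ, ENNReal.ofReal
            (Real.exp (y * f s * (inner ℝ (G s) z : ℝ)) - 1 - y * f s * (inner ℝ (G s) z : ℝ)) ∂ν :=
          (lintegral_add_compl _ measurableSet_ball).symm
      _ ≤ ENNReal.ofReal (C₁ * I₁) + ENNReal.ofReal (C₂ * I₂) := by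
          rw [hBc]
          exact add_le_add hball htail
      _ = ENNReal.ofReal (C₁ * I₁ + C₂ * I₂) :=
          (ENNReal.ofReal_add (by positivity) (by positivity)).symm
      _ = ENNReal.ofReal (K * y ^ 2 * f s ^ 2) := by
          congr 1
          rw [hK, hC₁, hC₂]
          ring
  -- outer integral
  have hint : IntegrableOn (fun s => f s ^ 2) (Set.Icc (0 : ℝ) T) := by
    apply Integrable.mono' (integrable_const (M ^ 2)) ((hf.pow_const 2).aestronglyMeasurable)
    filter_upwards [ae_restrict_mem measurableSet_Icc] with s hs
    have h := hfb s hs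
    calc ‖f s ^ 2‖ = |f s| ^ 2 := by rw [Real.norm_eq_abs, pow_abs]
      _ ≤ M ^ 2 := pow_le_pow_left₀ (abs_nonneg _) h 2
  have hfsq_nn : 0 ≤ ∫ s in Set.Icc (0 : ℝ) T, f s ^ 2 :=
    setIntegral_nonneg measurableSet_Icc (fun s _ => sq_nonneg _)
  calc ∫⁻ s in Set.Icc (0 : ℝ) T,
        ∫⁻ z, ENNReal.ofReal
          (Real.exp (y * f s * (inner ℝ (G s) z : ℝ)) - 1 - y * f s * (inner ℝ (G s) z : ℝ)) ∂ν
      ≤ ∫⁻ s in Set.Icc (0 : ℝ) T, ENNReal.ofReal (K * y ^ 2 * f s ^ 2) := by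
        apply setLIntegral_mono
        · exact (measurable_const.mul (hf.pow_const 2)).ennreal_ofReal
        · exact inner_bound
    _ = ∫⁻ s in Set.Icc (0 : ℝ) T, ENNReal.ofReal (K * y ^ 2) * ENNReal.ofReal (f s ^ 2) := by
        congr 1
        ext s
        rw [ENNReal.ofReal_mul (by positivity : (0:ℝ) ≤ K * y ^ 2)]
    _ = ENNReal.ofReal (K * y ^ 2) * ∫⁻ s in Set.Icc (0 : ℝ) T, ENNReal.ofReal (f s ^ 2) :=
        lintegral_const_mul' _ _ ENNReal.ofReal_ne_top
    _ = ENNReal.ofReal (K * y ^ 2) * ENNReal.ofReal (∫ s in Set.Icc (0 : ℝ) T, f s ^ 2) := by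
        rw [← ofReal_integral_eq_lintegral_ofReal hint
          (Filter.Eventually.of_forall (fun s => sq_nonneg _))]
    _ = ENNReal.ofReal (K * y ^ 2 * ∫ s in Set.Icc (0 : ℝ) T, f s ^ 2) := by
        rw [← ENNReal.ofReal_mul (by positivity)]
end

section
/- Let Z be a real random variable on a probability space (Ω, F, P) and let A, B ≥ 0. Suppose that for every u > 0, P(|Z| > A u + B √u) ≤ 2 exp(−u). Then for every p ∈ [1, ∞), E[|Z|^p]^{1/p} ≤ 2 p e^{1/(2e)} e^{−1} (√(8π) e^{1/(12p)})^{1/p} · A + 2 √p e^{1/(2e)} e^{−1/2} (√(2π) e^{1/(6p)})^{1/p} · B. -/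
open MeasureTheory

open Real Filter MeasureTheory
open scoped ENNReal

section StirlingRobbins

/-- lower bound for log -/
lemma log_ge_one_sub_inv {y : ℝ} (hy : 0 < y) : 1 - 1/y ≤ Real.log y := by
  have h := Real.log_le_sub_one_of_pos (show 0 < 1/y by positivity)
  rw [Real.log_div one_ne_zero hy.ne', Real.log_one] at h
  have hy' : (0:ℝ) < 1/y := by positivity
  linarith

noncomputable def dirksenH (t : ℝ) : ℝ :=
  t + t^3/(3*(1-t^2)) - (Real.log (1+t) - Real.log (1-t))/2

lemma hasDerivAt_dirksenH {t : ℝ} (h1 : -1 < t) (h2 : t < 1) :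
    HasDerivAt dirksenH (2*t^4/(3*(1-t^2)^2)) t := by
  have ht1 : (0:ℝ) < 1 + t := by linarith
  have ht2 : (0:ℝ) < 1 - t := by linarith
  have ht3 : (0:ℝ) < 1 - t^2 := by nlinarith
  have d1 : HasDerivAt (fun t : ℝ => t^3/(3*(1-t^2)))
      ((3*t^2 * (3*(1-t^2)) - t^3 * (3*(0-2*t)))/(3*(1-t^2))^2) t := by
    have hn : HasDerivAt (fun t : ℝ => t^3) (3*t^2) t := by
      simpa using (hasDerivAt_pow 3 t)
    have hd : HasDerivAt (fun t : ℝ => 3*(1-t^2)) (3*(0-2*t)) t := by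
      have : HasDerivAt (fun t : ℝ => 1-t^2) (0-2*t) t := by
        simpa using (hasDerivAt_pow 2 t).const_sub (1:ℝ)
      simpa using this.const_mul 3
    exact hn.div hd (by positivity)
  have d2 : HasDerivAt (fun t : ℝ => (Real.log (1+t) - Real.log (1-t))/2)
      ((1/(1+t) - (-1)/(1-t))/2) t := by
    have l1 : HasDerivAt (fun t : ℝ => Real.log (1+t)) (1/(1+t)) t := by
      have : HasDerivAt (fun t : ℝ => 1+t) 1 t := by
        exact (hasDerivAt_id' t).const_add (1:ℝ)
      simpa using this.log ht1.ne'
    have l2 : HasDerivAt (fun t : ℝ => Real.log (1-t)) ((-1)/(1-t)) t := by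
      have : HasDerivAt (fun t : ℝ => 1-t) (-1) t := by
        exact (hasDerivAt_id' t).const_sub (1:ℝ)
      simpa using this.log ht2.ne'
    exact (l1.sub l2).div_const 2
  have : HasDerivAt dirksenH _ t := ((hasDerivAt_id t).add d1).sub d2
  convert this using 1
  field_simp
  ring

lemma dirksenH_nonneg {t : ℝ} (h0 : 0 ≤ t) (h2 : t < 1) : 0 ≤ dirksenH t := by
  have h00 : dirksenH 0 = 0 := by simp [dirksenH]
  have hmono : MonotoneOn dirksenH (Set.Ico (0:ℝ) 1) := by
    have hder : ∀ x ∈ interior (Set.Ico (0:ℝ) 1), 0 ≤ deriv dirksenH x := by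
      intro x hx
      rw [interior_Ico] at hx
      rw [(hasDerivAt_dirksenH (by linarith [hx.1]) hx.2).deriv]
      have : (0:ℝ) < 1 - x^2 := by nlinarith [hx.1, hx.2]
      positivity
    apply monotoneOn_of_deriv_nonneg (convex_Ico 0 1) ?_ ?_ hder
    · intro x hx
      exact (hasDerivAt_dirksenH (by linarith [hx.1]) (by linarith [hx.2])).continuousAt.continuousWithinAt
    · intro x hx
      rw [interior_Ico] at hx
      exact (hasDerivAt_dirksenH (by linarith [hx.1]) hx.2).differentiableAt.differentiableWithinAt
  have := hmono (Set.mem_Ico.2 ⟨le_refl 0, one_pos⟩) (Set.mem_Ico.2 ⟨h0, h2⟩) h0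
  rwa [h00] at this

/-- Key inequality for the Stirling error telescoping. -/
lemma stirlingF_le {x : ℝ} (hx : 0 < x) :
    (x + 1/2) * Real.log ((x+1)/x) - 1 ≤ 1/(12*x) - 1/(12*(x+1)) := by
  set t : ℝ := 1/(2*x+1) with ht
  have h2x : (0:ℝ) < 2*x+1 := by linarith
  have ht0 : 0 < t := by positivity
  have ht1 : t < 1 := by
    rw [ht, div_lt_one h2x]; linarith
  have ht3 : (0:ℝ) < 1 - t^2 := by nlinarith
  have hH := dirksenH_nonneg ht0.le ht1
  unfold dirksenH at hH
  -- log ((x+1)/x) = log (1+t) - log (1-t)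
  have hlog : Real.log ((x+1)/x) = Real.log (1+t) - Real.log (1-t) := by
    rw [← Real.log_div (by positivity) (by nlinarith)]
    congr 1
    rw [ht]
    field_simp
    ring
  rw [hlog]
  -- from hH : (log(1+t)-log(1-t))/2 ≤ t + t^3/(3(1-t^2))
  -- multiply by (2x+1) = 1/t
  have key : Real.log (1+t) - Real.log (1-t) ≤ 2*t + 2*(t^3/(3*(1-t^2))) := by linarith
  have hmul : (x + 1/2) * (Real.log (1+t) - Real.log (1-t)) ≤ (x+1/2) * (2*t + 2*(t^3/(3*(1-t^2)))) :=
    mul_le_mul_of_nonneg_left key (by linarith)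
  have hx1 : (0:ℝ) < x + 1 := by linarith
  have e1 : 1 - t^2 = (4*x^2+4*x)/(2*x+1)^2 := by
    rw [ht]; field_simp; ring
  have hcomp : (x+1/2) * (2*t + 2*(t^3/(3*(1-t^2)))) = 1 + (1/(12*x) - 1/(12*(x+1))) := by
    rw [ht, e1]
    have h4 : (4*x^2+4*x) ≠ 0 := by nlinarith
    field_simp
    ring
  linarith

noncomputable def stirlingMu (x : ℝ) : ℝ :=
  Real.log (Real.Gamma x) - (x - 1/2) * Real.log x + x - Real.log (2*Real.pi)/2

lemma stirlingMu_rec {x : ℝ} (hx : 0 < x) :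
    stirlingMu x = ((x + 1/2) * Real.log ((x+1)/x) - 1) + stirlingMu (x+1) := by
  unfold stirlingMu
  rw [Real.Gamma_add_one hx.ne', Real.log_mul hx.ne' (Real.Gamma_pos_of_pos hx).ne',
      Real.log_div (by linarith) hx.ne']
  ring

-- μ(n) = log (stirlingSeq n) - log √π for n ≥ 1
lemma stirlingMu_nat_eq {n : ℕ} (hn : 1 ≤ n) :
    stirlingMu n = Real.log (Stirling.stirlingSeq n) - Real.log (Real.sqrt Real.pi) := by
  have hn0 : (0:ℝ) < n := by exact_mod_cast hn
  have hfac : Real.Gamma n = (Nat.factorial (n-1) : ℝ) := by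
    have h : ((n - 1 : ℕ) : ℝ) + 1 = n := by
      have h2 := Nat.succ_pred_eq_of_pos hn
      exact_mod_cast congrArg (Nat.cast : ℕ → ℝ) h2
    rw [← h, Real.Gamma_nat_eq_factorial]
  have hfac2 : (Nat.factorial n : ℝ) = n * (Nat.factorial (n-1) : ℝ) := by
    conv_lhs => rw [← Nat.succ_pred_eq_of_pos hn, Nat.factorial_succ]
    rw [Nat.pred_eq_sub_one]
    push_cast [Nat.cast_sub hn]
    ring
  rw [Stirling.log_stirlingSeq_formula]
  unfold stirlingMu
  rw [hfac, hfac2, Real.log_mul hn0.ne' (by positivity),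
      Real.log_mul two_ne_zero (by positivity : (n:ℝ) ≠ 0),
      Real.log_div hn0.ne' (Real.exp_pos 1).ne', Real.log_exp,
      Real.log_mul two_ne_zero Real.pi_ne_zero,
      Real.log_sqrt Real.pi_pos.le]
  ring

lemma stirlingMu_nat_tendsto :
    Tendsto (fun n : ℕ => stirlingMu n) atTop (nhds 0) := by
  have h1 : Tendsto (fun n : ℕ => Real.log (Stirling.stirlingSeq n) - Real.log (Real.sqrt Real.pi))
      atTop (nhds 0) := by
    have hlog : Tendsto (fun n : ℕ => Real.log (Stirling.stirlingSeq n)) atTop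
        (nhds (Real.log (Real.sqrt Real.pi))) :=
      (Stirling.tendsto_stirlingSeq_sqrt_pi).log (by positivity)
    have := hlog.sub (tendsto_const_nhds (x := Real.log (Real.sqrt Real.pi)) (f := atTop (α := ℕ)))
    simpa using this
  apply h1.congr'
  filter_upwards [eventually_ge_atTop 1] with n hn
  exact (stirlingMu_nat_eq hn).symm

lemma stirlingMu_le_aux {x : ℝ} (hx : 0 < x) (N : ℕ) :
    stirlingMu x ≤ 1/(12*x) - 1/(12*(x+N)) + stirlingMu (x+N) := by
  induction N with
  | zero => simp
  | succ n ih =>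
    have hxn : (0:ℝ) < x + n := by positivity
    have hrec := stirlingMu_rec hxn
    have hf := stirlingF_le hxn
    push_cast
    rw [show x + ((n:ℝ)+1) = (x + n) + 1 by ring]
    push_cast at ih
    linarith

lemma stirlingMu_interp {n : ℕ} (hn : 1 ≤ n) {s : ℝ} (hs0 : 0 ≤ s) (hs1 : s ≤ 1) :
    stirlingMu (n + s) ≤ (1-s) * stirlingMu n + s * stirlingMu ((n:ℝ)+1)
      + 1/(12*(n:ℝ)) + 1/(2*(n:ℝ)) := by
  have hn0 : (0:ℝ) < n := by exact_mod_cast hn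
  have hn0' : (1:ℝ) ≤ n := by exact_mod_cast hn
  have hn1 : (0:ℝ) < (n:ℝ) + 1 := by linarith
  have hns : (0:ℝ) < (n:ℝ) + s := by linarith
  have hconv : Real.log (Real.Gamma ((n:ℝ) + s)) ≤
      (1-s) * Real.log (Real.Gamma n) + s * Real.log (Real.Gamma ((n:ℝ)+1)) := by
    have := Real.convexOn_log_Gamma.2 (show (n:ℝ) ∈ Set.Ioi 0 from hn0)
      (show (n:ℝ)+1 ∈ Set.Ioi 0 from hn1) (by linarith : (0:ℝ) ≤ 1-s) hs0 (by ring)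
    simp only [smul_eq_mul, Function.comp_apply] at this
    rw [show (n:ℝ) + s = (1 - s) * n + s * (n + 1) by ring]; exact this
  set ln := Real.log (n:ℝ) with hln
  set D1 := Real.log (((n:ℝ)+1)/n) with hD1
  set Ds := Real.log (((n:ℝ)+s)/n) with hDs
  have e1 : Real.log ((n:ℝ)+1) = ln + D1 := by
    rw [hD1, Real.log_div hn1.ne' hn0.ne']; ring
  have es : Real.log ((n:ℝ)+s) = ln + Ds := by
    rw [hDs, Real.log_div hns.ne' hn0.ne']; ring
  have h1 := stirlingF_le hn0
  have hmul1 : s * (((n:ℝ) + 1/2) * D1) ≤ s * (1 + (1/(12*(n:ℝ)) - 1/(12*((n:ℝ)+1)))) :=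
    mul_le_mul_of_nonneg_left (by rw [hD1]; linarith) hs0
  have h2 : s - s/(2*(n:ℝ)) ≤ ((n:ℝ) + s - 1/2) * Ds := by
    have hy : (0:ℝ) < ((n:ℝ)+s)/n := by positivity
    have hlb : s/((n:ℝ)+s) ≤ Ds := by
      have hlog := log_ge_one_sub_inv hy
      have heq : 1 - 1/(((n:ℝ)+s)/n) = s/((n:ℝ)+s) := by
        rw [one_div_div]; field_simp; ring
      rw [hDs]; linarith
    have hpos : (0:ℝ) < (n:ℝ) + s - 1/2 := by linarith
    have hmul := mul_le_mul_of_nonneg_left hlb hpos.le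
    have heq2 : ((n:ℝ) + s - 1/2) * (s/((n:ℝ)+s)) = s - s/(2*((n:ℝ)+s)) := by
      field_simp
    have hcmp : s/(2*((n:ℝ)+s)) ≤ s/(2*(n:ℝ)) := by
      apply div_le_div_of_nonneg_left hs0 (by positivity) (by linarith)
    linarith
  have haux1 : s * (1/(12*(n:ℝ)) - 1/(12*((n:ℝ)+1))) ≤ 1/(12*(n:ℝ)) := by
    have h12 : (0:ℝ) < 1/(12*(n:ℝ)) := by positivity
    have h12' : (0:ℝ) < 1/(12*((n:ℝ)+1)) := by positivity
    nlinarith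
  have haux2 : s/(2*(n:ℝ)) ≤ 1/(2*(n:ℝ)) := by gcongr
  unfold stirlingMu
  rw [e1, es]
  nlinarith [hconv, hmul1, h2, haux1, haux2]

lemma stirlingMu_le {x : ℝ} (hx : 0 < x) : stirlingMu x ≤ 1/(12*x) := by
  set m : ℕ := ⌈x⌉₊ with hm
  have hm1 : 1 ≤ m := Nat.one_le_iff_ne_zero.2 (by
    simp only [hm, ne_eq, Nat.ceil_eq_zero, not_le]; exact hx)
  have hxm : x ≤ m := Nat.le_ceil x
  have hmx : (m:ℝ) < x + 1 := Nat.ceil_lt_add_one hx.le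
  set s : ℝ := x - m + 1 with hs
  have hs0 : 0 ≤ s := by simp only [hs]; linarith
  have hs1 : s ≤ 1 := by simp only [hs]; linarith
  set u : ℕ → ℝ := fun N =>
    (1-s) * stirlingMu ((m+N : ℕ):ℝ) + s * stirlingMu ((m+N+1 : ℕ):ℝ)
      + 1/(12*((m+N:ℕ):ℝ)) + 1/(2*((m+N:ℕ):ℝ)) with hu
  have key : ∀ N : ℕ, stirlingMu x - 1/(12*x) ≤ u N := by
    intro N
    have h1 := stirlingMu_le_aux hx (N+1)
    have hmn : 1 ≤ m + N := hm1.trans (Nat.le_add_right m N)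
    have h2 := stirlingMu_interp hmn hs0 hs1
    have hxx : x + ((N+1 : ℕ):ℝ) = ((m+N:ℕ):ℝ) + s := by
      push_cast; simp only [hs]; ring
    have hcast1 : ((m+N:ℕ):ℝ) + 1 = ((m+N+1:ℕ):ℝ) := by push_cast; ring
    rw [hcast1] at h2
    push_cast at h1 h2 ⊢
    rw [hu]
    dsimp only
    push_cast
    have hmn' : (1:ℝ) ≤ (m:ℝ) + N := by
      have : (1:ℕ) ≤ m + N := hmn
      exact_mod_cast this
    have hnn : (0:ℝ) ≤ 1/(12*(x+((N:ℝ)+1))) := by positivity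
    have hxx' : x + ((N:ℝ)+1) = (m:ℝ) + N + s := by simp only [hs]; ring
    rw [hxx'] at h1 hnn
    linarith
  have hA : Tendsto (fun N : ℕ => stirlingMu ((m+N:ℕ):ℝ)) atTop (nhds 0) := by
    have h := stirlingMu_nat_tendsto.comp (tendsto_add_atTop_nat m)
    have he : (fun N : ℕ => stirlingMu ((m+N:ℕ):ℝ))
        = (fun N : ℕ => stirlingMu (((N+m:ℕ)):ℝ)) := by
      funext N; rw [Nat.add_comm]
    rw [he]; exact h
  have hB : Tendsto (fun N : ℕ => stirlingMu ((m+N+1:ℕ):ℝ)) atTop (nhds 0) := by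
    have h := stirlingMu_nat_tendsto.comp (tendsto_add_atTop_nat (m+1))
    have he : (fun N : ℕ => stirlingMu ((m+N+1:ℕ):ℝ))
        = (fun N : ℕ => stirlingMu (((N+(m+1):ℕ)):ℝ)) := by
      funext N; rw [show m+N+1 = N+(m+1) by omega]
    rw [he]; exact h
  have hnat : Tendsto (fun N : ℕ => ((m+N:ℕ):ℝ)) atTop atTop := by
    have : (fun N : ℕ => ((m+N:ℕ):ℝ)) = (fun N : ℕ => (m:ℝ) + (N:ℝ)) := by
      funext N; push_cast; ring
    rw [this]
    exact tendsto_atTop_add_const_left atTop (m:ℝ) tendsto_natCast_atTop_atTop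
  have hC : Tendsto (fun N : ℕ => 1/(12*((m+N:ℕ):ℝ))) atTop (nhds 0) := by
    simp only [one_div]
    exact (hnat.const_mul_atTop (show (0:ℝ) < 12 by norm_num)).inv_tendsto_atTop
  have hD : Tendsto (fun N : ℕ => 1/(2*((m+N:ℕ):ℝ))) atTop (nhds 0) := by
    simp only [one_div]
    exact (hnat.const_mul_atTop (show (0:ℝ) < 2 by norm_num)).inv_tendsto_atTop
  have hu0 : Tendsto u atTop (nhds 0) := by
    have h := (((hA.const_mul (1-s)).add (hB.const_mul s)).add hC).add hD
    simpa [hu] using h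
  have := ge_of_tendsto' hu0 key
  linarith

/-- Robbins-type sharp Stirling upper bound for the Gamma function. -/
lemma Gamma_le_stirling {x : ℝ} (hx : 0 < x) :
    Real.Gamma (x+1) ≤ Real.sqrt (2*Real.pi) * Real.sqrt x * (x / Real.exp 1) ^ x
      * Real.exp (1/(12*x)) := by
  have hmu := stirlingMu_le hx
  have hGpos := Real.Gamma_pos_of_pos hx
  have hlog : Real.log (Real.Gamma x)
      ≤ (x-1/2)*Real.log x - x + Real.log (2*Real.pi)/2 + 1/(12*x) := by
    unfold stirlingMu at hmu; linarith
  have hG : Real.Gamma x ≤ Real.exp ((x-1/2)*Real.log x - x + Real.log (2*Real.pi)/2 + 1/(12*x)) := by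
    calc Real.Gamma x = Real.exp (Real.log (Real.Gamma x)) := (Real.exp_log hGpos).symm
    _ ≤ _ := Real.exp_le_exp.2 hlog
  have hexp : Real.exp ((x-1/2)*Real.log x - x + Real.log (2*Real.pi)/2 + 1/(12*x))
      = x ^ (x - 1/2 : ℝ) * Real.exp (-x) * Real.sqrt (2*Real.pi) * Real.exp (1/(12*x)) := by
    rw [show (x-1/2)*Real.log x - x + Real.log (2*Real.pi)/2 + 1/(12*x)
        = (Real.log x * (x-1/2)) + (-x) + (Real.log (2*Real.pi) * (1/2 : ℝ)) + 1/(12*x) by ring]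
    rw [Real.exp_add, Real.exp_add, Real.exp_add, ← Real.rpow_def_of_pos hx,
        ← Real.rpow_def_of_pos (by positivity : (0:ℝ) < 2*Real.pi),
        ← Real.sqrt_eq_rpow]
  rw [Real.Gamma_add_one hx.ne']
  have hge : Real.Gamma (x+1) ≤ x * (x ^ (x - 1/2 : ℝ) * Real.exp (-x) * Real.sqrt (2*Real.pi)
      * Real.exp (1/(12*x))) := by
    rw [Real.Gamma_add_one hx.ne']
    exact mul_le_mul_of_nonneg_left (hexp ▸ hG) hx.le
  rw [Real.Gamma_add_one hx.ne'] at hge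
  -- now algebra: x * x^(x-1/2) = √x * x^x  and  x^x * exp(-x) = (x/e)^x
  have halg : x * (x ^ (x - 1/2 : ℝ) * Real.exp (-x) * Real.sqrt (2*Real.pi) * Real.exp (1/(12*x)))
      = Real.sqrt (2*Real.pi) * Real.sqrt x * (x / Real.exp 1) ^ x * Real.exp (1/(12*x)) := by
    have h1 : x * x ^ (x - 1/2 : ℝ) = Real.sqrt x * x ^ (x:ℝ) := by
      rw [Real.sqrt_eq_rpow]
      calc x * x ^ (x - 1/2 : ℝ) = x ^ (1:ℝ) * x ^ (x - 1/2 : ℝ) := by rw [Real.rpow_one]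
      _ = x ^ ((1:ℝ) + (x - 1/2)) := (Real.rpow_add hx _ _).symm
      _ = x ^ ((1/2:ℝ) + x) := by rw [show (1:ℝ)+(x-1/2) = 1/2+x by ring]
      _ = x ^ (1/2:ℝ) * x ^ (x:ℝ) := Real.rpow_add hx _ _
    have h2 : x ^ (x:ℝ) * Real.exp (-x) = (x / Real.exp 1) ^ x := by
      rw [Real.div_rpow hx.le (Real.exp_pos 1).le, Real.exp_one_rpow,
          Real.exp_neg, div_eq_mul_inv]
    calc x * (x ^ (x - 1/2 : ℝ) * Real.exp (-x) * Real.sqrt (2*Real.pi) * Real.exp (1/(12*x)))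
        = (x * x ^ (x - 1/2 : ℝ)) * Real.exp (-x) * Real.sqrt (2*Real.pi) * Real.exp (1/(12*x)) := by ring
      _ = Real.sqrt x * (x ^ (x:ℝ) * Real.exp (-x)) * Real.sqrt (2*Real.pi) * Real.exp (1/(12*x)) := by rw [h1]; ring
      _ = _ := by rw [h2]; ring
  linarith [halg ▸ hge]

end StirlingRobbins

section MomentsFromTails

lemma moment_from_tail {Ω : Type*} [MeasurableSpace Ω] (P : Measure Ω) [IsProbabilityMeasure P]
    (W : Ω → ℝ) (hW : Measurable W) (hWnn : ∀ ω, 0 ≤ W ω)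
    (h : ∀ u > (0:ℝ), P {ω | W ω > u} ≤ ENNReal.ofReal (2 * Real.exp (-u)))
    (q : ℝ) (hq : 0 < q) :
    ∫⁻ ω, ENNReal.ofReal (W ω ^ q) ∂P ≤ ENNReal.ofReal (2 * Real.Gamma (q+1)) := by
  rw [lintegral_rpow_eq_lintegral_meas_lt_mul P (Filter.Eventually.of_forall hWnn)
    hW.aemeasurable hq]
  have step1 : ∫⁻ t in Set.Ioi (0:ℝ), P {a | t < W a} * ENNReal.ofReal (t^(q-1))
      ≤ ∫⁻ t in Set.Ioi (0:ℝ), ENNReal.ofReal (2 * (Real.exp (-t) * t^(q-1))) := by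
    apply setLIntegral_mono (by fun_prop) ?_
    intro t ht
    calc P {a | t < W a} * ENNReal.ofReal (t^(q-1))
        ≤ ENNReal.ofReal (2*Real.exp (-t)) * ENNReal.ofReal (t^(q-1)) :=
          mul_le_mul_left (h t ht) _
      _ = _ := by rw [← ENNReal.ofReal_mul (by positivity)]; congr 1; ring
  have step2 : ∫⁻ t in Set.Ioi (0:ℝ), ENNReal.ofReal (2 * (Real.exp (-t) * t^(q-1)))
      = ENNReal.ofReal (2 * Real.Gamma q) := by
    rw [← MeasureTheory.ofReal_integral_eq_lintegral_ofReal]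
    · rw [integral_const_mul, ← Real.Gamma_eq_integral hq]
    · exact (Real.GammaIntegral_convergent hq).const_mul 2
    · filter_upwards [self_mem_ae_restrict (measurableSet_Ioi : MeasurableSet (Set.Ioi (0:ℝ)))]
        with t ht
      have ht' : (0:ℝ) < t := ht
      positivity
  calc ENNReal.ofReal q * ∫⁻ t in Set.Ioi 0, P {a | t < W a} * ENNReal.ofReal (t ^ (q - 1))
      ≤ ENNReal.ofReal q * ENNReal.ofReal (2 * Real.Gamma q) :=
        mul_le_mul_right (step1.trans_eq step2) _
    _ = ENNReal.ofReal (q * (2 * Real.Gamma q)) := by rw [← ENNReal.ofReal_mul hq.le]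
    _ = ENNReal.ofReal (2 * Real.Gamma (q+1)) := by
        rw [Real.Gamma_add_one hq.ne']; congr 1; ring

lemma exp_rpow' (x p : ℝ) : Real.exp x ^ (p:ℝ) = Real.exp (x * p) := by
  rw [Real.rpow_def_of_pos (Real.exp_pos x), Real.log_exp]

lemma sqrt_le_exp_div_two_e {p : ℝ} (hp : 1 ≤ p) :
    Real.sqrt p ≤ Real.exp (p / (2 * Real.exp 1)) := by
  have hp0 : (0:ℝ) < p := by linarith
  have hlog : Real.log p ≤ p / Real.exp 1 := by
    have h1 : Real.log (p / Real.exp 1) ≤ p / Real.exp 1 - 1 :=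
      Real.log_le_sub_one_of_pos (by positivity)
    rw [Real.log_div hp0.ne' (Real.exp_pos 1).ne', Real.log_exp] at h1
    linarith
  have hsq : Real.sqrt p = Real.exp (Real.log p * (1/2)) := by
    rw [Real.sqrt_eq_rpow, Real.rpow_def_of_pos hp0]
  rw [hsq]
  apply Real.exp_le_exp.2
  have heq : (p/Real.exp 1) * (1/2) = p/(2*Real.exp 1) := by
    rw [mul_one_div, div_div, mul_comm]
  linarith [mul_le_mul_of_nonneg_right hlog (show (0:ℝ) ≤ 1/2 by norm_num)]

lemma myRpowInvRpow {C : ℝ} (hC : 0 ≤ C) {p : ℝ} (hp0 : p ≠ 0) :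
    (C ^ (1/p : ℝ)) ^ (p:ℝ) = C := by
  rw [← Real.rpow_mul hC, one_div_mul_cancel hp0, Real.rpow_one]

lemma myRpowRpowInv {C : ℝ} (hC : 0 ≤ C) {p : ℝ} (hp0 : p ≠ 0) :
    (C ^ (p : ℝ)) ^ (1/p:ℝ) = C := by
  rw [← Real.rpow_mul hC, mul_one_div_cancel hp0, Real.rpow_one]

lemma const_ineq1 {p : ℝ} (hp : 1 ≤ p) :
    (2 * Real.Gamma (p+1)) ^ (1/p : ℝ) ≤
      p * Real.exp (1/(2*Real.exp 1)) * Real.exp (-1 : ℝ)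
        * (Real.sqrt (8*Real.pi) * Real.exp (1/(12*p))) ^ (1/p : ℝ) := by
  have hp0 : (0:ℝ) < p := by linarith
  have hΓ : (0:ℝ) < Real.Gamma (p+1) := Real.Gamma_pos_of_pos (by linarith)
  set C := p * Real.exp (1/(2*Real.exp 1)) * Real.exp (-1 : ℝ)
        * (Real.sqrt (8*Real.pi) * Real.exp (1/(12*p))) ^ (1/p : ℝ) with hCdef
  have hC0 : 0 ≤ C := by positivity
  have hCp : C ^ (p:ℝ) = p ^ (p:ℝ) * Real.exp (p/(2*Real.exp 1)) * Real.exp (-p)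
      * (Real.sqrt (8*Real.pi) * Real.exp (1/(12*p))) := by
    rw [hCdef, Real.mul_rpow (by positivity) (by positivity),
        Real.mul_rpow (by positivity) (by positivity),
        Real.mul_rpow (by positivity) (by positivity),
        exp_rpow', exp_rpow', myRpowInvRpow (by positivity) hp0.ne']
    rw [show (1/(2*Real.exp 1)) * p = p/(2*Real.exp 1) by ring,
        show (-1:ℝ) * p = -p by ring]
  have hmain : 2 * Real.Gamma (p+1) ≤ C ^ (p:ℝ) := by
    rw [hCp]
    have hrob := Gamma_le_stirling hp0
    have h8 : Real.sqrt (8*Real.pi) = 2 * Real.sqrt (2*Real.pi) := by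
      rw [show (8:ℝ)*Real.pi = 4*(2*Real.pi) by ring,
          Real.sqrt_mul (by norm_num : (0:ℝ) ≤ 4),
          show Real.sqrt 4 = 2 by
            rw [show (4:ℝ) = 2^2 by norm_num, Real.sqrt_sq (by norm_num : (0:ℝ) ≤ 2)]]
    have hdiv : (p / Real.exp 1) ^ (p:ℝ) = p ^ (p:ℝ) * Real.exp (-p) := by
      rw [Real.div_rpow hp0.le (Real.exp_pos 1).le, Real.exp_one_rpow, Real.exp_neg,
        div_eq_mul_inv]
    have hsqrtp := sqrt_le_exp_div_two_e hp
    calc 2 * Real.Gamma (p+1)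
        ≤ 2 * (Real.sqrt (2*Real.pi) * Real.sqrt p * (p / Real.exp 1) ^ (p:ℝ)
            * Real.exp (1/(12*p))) := by linarith
      _ ≤ 2 * (Real.sqrt (2*Real.pi) * Real.exp (p/(2*Real.exp 1)) * (p / Real.exp 1) ^ (p:ℝ)
            * Real.exp (1/(12*p))) := by gcongr
      _ = p ^ (p:ℝ) * Real.exp (p/(2*Real.exp 1)) * Real.exp (-p)
            * (Real.sqrt (8*Real.pi) * Real.exp (1/(12*p))) := by
          rw [hdiv, h8]; ring
  calc (2 * Real.Gamma (p+1)) ^ (1/p : ℝ)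
      ≤ (C ^ (p:ℝ)) ^ (1/p : ℝ) :=
        Real.rpow_le_rpow (by linarith) hmain (by positivity)
    _ = C := myRpowRpowInv hC0 hp0.ne'

lemma const_ineq2 {p : ℝ} (hp : 1 ≤ p) :
    (2 * Real.Gamma (p/2+1)) ^ (1/p : ℝ) ≤
      Real.sqrt p * Real.exp (1/(2*Real.exp 1)) * Real.exp (-(1:ℝ)/2)
        * (Real.sqrt (2*Real.pi) * Real.exp (1/(6*p))) ^ (1/p : ℝ) := by
  have hp0 : (0:ℝ) < p := by linarith
  have hΓ : (0:ℝ) < Real.Gamma (p/2+1) := Real.Gamma_pos_of_pos (by linarith)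
  set C := Real.sqrt p * Real.exp (1/(2*Real.exp 1)) * Real.exp (-(1:ℝ)/2)
        * (Real.sqrt (2*Real.pi) * Real.exp (1/(6*p))) ^ (1/p : ℝ) with hCdef
  have hC0 : 0 ≤ C := by positivity
  have hCp : C ^ (p:ℝ) = p ^ (p/2:ℝ) * Real.exp (p/(2*Real.exp 1)) * Real.exp (-(p/2))
      * (Real.sqrt (2*Real.pi) * Real.exp (1/(6*p))) := by
    rw [hCdef, Real.mul_rpow (by positivity) (by positivity),
        Real.mul_rpow (by positivity) (by positivity),
        Real.mul_rpow (by positivity) (by positivity),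
        exp_rpow', exp_rpow', myRpowInvRpow (by positivity) hp0.ne']
    rw [Real.sqrt_eq_rpow, ← Real.rpow_mul hp0.le]
    rw [show (1/(2*Real.exp 1)) * p = p/(2*Real.exp 1) by ring,
        show (-(1:ℝ)/2) * p = -(p/2) by ring,
        show (1/2:ℝ) * p = p/2 by ring]
  have hmain : 2 * Real.Gamma (p/2+1) ≤ C ^ (p:ℝ) := by
    rw [hCp]
    have hx2 : (0:ℝ) < p/2 := by linarith
    have hrob := Gamma_le_stirling hx2
    rw [show 1/(12*(p/2)) = 1/(6*p) by ring] at hrob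
    have hdiv : (p/2 / Real.exp 1) ^ (p/2:ℝ)
        = p ^ (p/2:ℝ) * ((2:ℝ) ^ (p/2:ℝ))⁻¹ * Real.exp (-(p/2)) := by
      rw [Real.div_rpow (by linarith) (Real.exp_pos 1).le, Real.exp_one_rpow,
          Real.div_rpow hp0.le (by norm_num : (0:ℝ) ≤ 2), Real.exp_neg]
      field_simp
    -- key: 2 * √(p/2) ≤ 2^(p/2) * exp(p/(2e))
    have hsqrtp := sqrt_le_exp_div_two_e hp
    have hkey : 2 * Real.sqrt (p/2) ≤ (2:ℝ) ^ (p/2:ℝ) * Real.exp (p/(2*Real.exp 1)) := by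
      have hs2 : Real.sqrt (p/2) = Real.sqrt p / Real.sqrt 2 := Real.sqrt_div hp0.le 2
      have hs : Real.sqrt 2 * Real.sqrt 2 = 2 := Real.mul_self_sqrt (by norm_num)
      have h22 : (2:ℝ) * (Real.sqrt p / Real.sqrt 2) = Real.sqrt 2 * Real.sqrt p := by
        rw [mul_div_assoc', div_eq_iff (by positivity : Real.sqrt 2 ≠ 0)]
        linear_combination (-Real.sqrt p) * hs
      rw [hs2, h22]
      have hsqrt2le : Real.sqrt 2 ≤ (2:ℝ)^(p/2:ℝ) := by
        rw [Real.sqrt_eq_rpow]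
        exact Real.rpow_le_rpow_of_exponent_le (by norm_num) (by linarith)
      exact mul_le_mul hsqrt2le hsqrtp (Real.sqrt_nonneg p) (by positivity)
    have h2ne : ((2:ℝ)^(p/2:ℝ)) ≠ 0 := by positivity
    calc 2 * Real.Gamma (p/2+1)
        ≤ 2 * (Real.sqrt (2*Real.pi) * Real.sqrt (p/2) * (p/2 / Real.exp 1) ^ (p/2:ℝ)
            * Real.exp (1/(6*p))) := by linarith
      _ = Real.sqrt (2*Real.pi) * (2*Real.sqrt (p/2)) * (p/2 / Real.exp 1) ^ (p/2:ℝ)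
            * Real.exp (1/(6*p)) := by ring
      _ ≤ Real.sqrt (2*Real.pi) * ((2:ℝ)^(p/2:ℝ) * Real.exp (p/(2*Real.exp 1)))
            * (p/2 / Real.exp 1) ^ (p/2:ℝ) * Real.exp (1/(6*p)) := by gcongr
      _ = p ^ (p/2:ℝ) * Real.exp (p/(2*Real.exp 1)) * Real.exp (-(p/2))
            * (Real.sqrt (2*Real.pi) * Real.exp (1/(6*p))) := by
          rw [hdiv]; field_simp
  calc (2 * Real.Gamma (p/2+1)) ^ (1/p : ℝ)
      ≤ (C ^ (p:ℝ)) ^ (1/p : ℝ) :=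
        Real.rpow_le_rpow (by linarith) hmain (by positivity)
    _ = C := myRpowRpowInv hC0 hp0.ne'

lemma main_pos {Ω : Type*} [MeasurableSpace Ω] (P : Measure Ω) [IsProbabilityMeasure P]
    (Z : Ω → ℝ) (hZ : Measurable Z) (A B : ℝ) (hA : 0 < A) (hB : 0 < B)
    (h : ∀ u > (0 : ℝ),
      P {ω | |Z ω| > A * u + B * Real.sqrt u} ≤ ENNReal.ofReal (2 * Real.exp (-u)))
    (p : ℝ) (hp : 1 ≤ p) :
    (∫⁻ ω, ENNReal.ofReal (|Z ω| ^ p) ∂P) ^ (1 / p) ≤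
      ENNReal.ofReal
        (2 * p * Real.exp (1 / (2 * Real.exp 1)) * Real.exp (-1) *
            (Real.sqrt (8 * Real.pi) * Real.exp (1 / (12 * p))) ^ (1 / p) * A +
          2 * Real.sqrt p * Real.exp (1 / (2 * Real.exp 1)) * Real.exp (-(1 : ℝ) / 2) *
            (Real.sqrt (2 * Real.pi) * Real.exp (1 / (6 * p))) ^ (1 / p) * B) := by
  have hp0 : (0:ℝ) < p := by linarith
  set V : Ω → ℝ := fun ω => min (|Z ω| / (2*A)) ((|Z ω| / (2*B))^2) with hV
  have hVmeas : Measurable V := ((hZ.abs.div_const _)).min ((hZ.abs.div_const _).pow_const 2)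
  have hVnn : ∀ ω, 0 ≤ V ω := fun ω => le_min (by positivity) (by positivity)
  have hVtail : ∀ u > (0:ℝ), P {ω | V ω > u} ≤ ENNReal.ofReal (2*Real.exp (-u)) := by
    intro u hu
    refine le_trans (measure_mono ?_) (h u hu)
    intro ω hω
    simp only [Set.mem_setOf_eq, hV, lt_min_iff] at hω ⊢
    obtain ⟨h1, h2⟩ := hω
    have hz1 : 2*A*u < |Z ω| := by
      rw [lt_div_iff₀ (by positivity : (0:ℝ) < 2*A)] at h1; linarith
    have hz2 : 2*B*Real.sqrt u < |Z ω| := by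
      have hs := Real.sqrt_lt_sqrt hu.le h2
      rw [Real.sqrt_sq (by positivity)] at hs
      rw [lt_div_iff₀ (by positivity : (0:ℝ) < 2*B)] at hs
      linarith
    linarith
  have hpt : ∀ ω, |Z ω| ≤ 2*A*V ω + 2*B*Real.sqrt (V ω) := by
    intro ω
    have hsnn : 0 ≤ Real.sqrt (V ω) := Real.sqrt_nonneg _
    rcases min_cases (|Z ω| / (2*A)) ((|Z ω| / (2*B))^2) with ⟨heq, _⟩ | ⟨heq, _⟩
    · have h2A : 2*A*(V ω) = |Z ω| := by
        rw [hV]; simp only [heq]; field_simp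
      nlinarith
    · have h2B : 2*B*Real.sqrt (V ω) = |Z ω| := by
        rw [hV]; simp only [heq]
        rw [Real.sqrt_sq (by positivity)]
        field_simp
      have hVnn' := hVnn ω
      nlinarith
  set F : Ω → ℝ≥0∞ := fun ω => ENNReal.ofReal (2*A*V ω) with hF
  set G : Ω → ℝ≥0∞ := fun ω => ENNReal.ofReal (2*B*Real.sqrt (V ω)) with hG
  have hFmeas : Measurable F := (measurable_const.mul hVmeas).ennreal_ofReal
  have hGmeas : Measurable G := (measurable_const.mul hVmeas.sqrt).ennreal_ofReal
  have step1 : ∫⁻ ω, ENNReal.ofReal (|Z ω| ^ p) ∂P ≤ ∫⁻ ω, ((F + G) ω) ^ (p:ℝ) ∂P := by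
    apply lintegral_mono
    intro ω
    calc ENNReal.ofReal (|Z ω| ^ p)
        ≤ ENNReal.ofReal ((2*A*V ω + 2*B*Real.sqrt (V ω)) ^ p) :=
          ENNReal.ofReal_le_ofReal (Real.rpow_le_rpow (abs_nonneg _) (hpt ω) hp0.le)
      _ = (ENNReal.ofReal (2*A*V ω + 2*B*Real.sqrt (V ω))) ^ (p:ℝ) := by
          rw [← ENNReal.ofReal_rpow_of_nonneg (by positivity) hp0.le]
      _ = ((F + G) ω) ^ (p:ℝ) := by
          rw [Pi.add_apply, hF, hG,
            ← ENNReal.ofReal_add (by positivity) (by positivity)]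
  have step2 : (∫⁻ ω, ((F+G) ω) ^ (p:ℝ) ∂P) ^ (1/p:ℝ) ≤
      (∫⁻ ω, (F ω) ^ (p:ℝ) ∂P)^(1/p:ℝ) + (∫⁻ ω, (G ω)^(p:ℝ) ∂P)^(1/p:ℝ) :=
    ENNReal.lintegral_Lp_add_le hFmeas.aemeasurable hGmeas.aemeasurable hp
  -- F part
  have hFeq : ∫⁻ ω, (F ω) ^ (p:ℝ) ∂P
      = ENNReal.ofReal ((2*A)^(p:ℝ)) * ∫⁻ ω, ENNReal.ofReal (V ω ^ (p:ℝ)) ∂P := by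
    rw [← lintegral_const_mul' _ _ ENNReal.ofReal_ne_top]
    congr 1; funext ω
    rw [hF]
    simp only
    rw [show 2*A*V ω = (2*A) * (V ω) by ring, ENNReal.ofReal_mul (by positivity),
        ENNReal.mul_rpow_of_nonneg _ _ hp0.le,
        ENNReal.ofReal_rpow_of_nonneg (by positivity) hp0.le,
        ENNReal.ofReal_rpow_of_nonneg (hVnn ω) hp0.le]
  have hGeq : ∫⁻ ω, (G ω) ^ (p:ℝ) ∂P
      = ENNReal.ofReal ((2*B)^(p:ℝ)) * ∫⁻ ω, ENNReal.ofReal (V ω ^ (p/2:ℝ)) ∂P := by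
    rw [← lintegral_const_mul' _ _ ENNReal.ofReal_ne_top]
    congr 1; funext ω
    rw [hG]
    simp only
    have hsq : (Real.sqrt (V ω)) ^ (p:ℝ) = V ω ^ (p/2:ℝ) := by
      rw [Real.sqrt_eq_rpow, ← Real.rpow_mul (hVnn ω), one_div, inv_mul_eq_div]
    rw [show 2*B*Real.sqrt (V ω) = (2*B) * (Real.sqrt (V ω)) by ring,
        ENNReal.ofReal_mul (by positivity),
        ENNReal.mul_rpow_of_nonneg _ _ hp0.le,
        ENNReal.ofReal_rpow_of_nonneg (by positivity) hp0.le,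
        ENNReal.ofReal_rpow_of_nonneg (Real.sqrt_nonneg _) hp0.le, hsq]
  have E1 := moment_from_tail P V hVmeas hVnn hVtail p hp0
  have E2 := moment_from_tail P V hVmeas hVnn hVtail (p/2) (by linarith)
  have hΓ1 : (0:ℝ) < Real.Gamma (p+1) := Real.Gamma_pos_of_pos (by linarith)
  have hΓ2 : (0:ℝ) < Real.Gamma (p/2+1) := Real.Gamma_pos_of_pos (by linarith)
  have hFle : (∫⁻ ω, (F ω) ^ (p:ℝ) ∂P)^(1/p:ℝ)
      ≤ ENNReal.ofReal (2*A * (2 * Real.Gamma (p+1)) ^ (1/p:ℝ)) := by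
    rw [hFeq]
    calc (ENNReal.ofReal ((2*A)^(p:ℝ)) * ∫⁻ ω, ENNReal.ofReal (V ω ^ (p:ℝ)) ∂P)^(1/p:ℝ)
        ≤ (ENNReal.ofReal ((2*A)^(p:ℝ)) * ENNReal.ofReal (2 * Real.Gamma (p+1)))^(1/p:ℝ) := by
          exact ENNReal.rpow_le_rpow (mul_le_mul_right E1 _) (by positivity)
      _ = ENNReal.ofReal (((2*A)^(p:ℝ) * (2 * Real.Gamma (p+1)))) ^ (1/p:ℝ) := by
          rw [← ENNReal.ofReal_mul (by positivity)]
      _ = ENNReal.ofReal (((2*A)^(p:ℝ) * (2 * Real.Gamma (p+1))) ^ (1/p:ℝ)) := by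
          rw [← ENNReal.ofReal_rpow_of_nonneg (by positivity) (by positivity)]
      _ = ENNReal.ofReal (2*A * (2 * Real.Gamma (p+1)) ^ (1/p:ℝ)) := by
          rw [Real.mul_rpow (by positivity) (by positivity),
              myRpowRpowInv (by positivity) hp0.ne']
  have hGle : (∫⁻ ω, (G ω) ^ (p:ℝ) ∂P)^(1/p:ℝ)
      ≤ ENNReal.ofReal (2*B * (2 * Real.Gamma (p/2+1)) ^ (1/p:ℝ)) := by
    rw [hGeq]
    calc (ENNReal.ofReal ((2*B)^(p:ℝ)) * ∫⁻ ω, ENNReal.ofReal (V ω ^ (p/2:ℝ)) ∂P)^(1/p:ℝ)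
        ≤ (ENNReal.ofReal ((2*B)^(p:ℝ)) * ENNReal.ofReal (2 * Real.Gamma (p/2+1)))^(1/p:ℝ) := by
          exact ENNReal.rpow_le_rpow (mul_le_mul_right E2 _) (by positivity)
      _ = ENNReal.ofReal (((2*B)^(p:ℝ) * (2 * Real.Gamma (p/2+1)))) ^ (1/p:ℝ) := by
          rw [← ENNReal.ofReal_mul (by positivity)]
      _ = ENNReal.ofReal (((2*B)^(p:ℝ) * (2 * Real.Gamma (p/2+1))) ^ (1/p:ℝ)) := by
          rw [← ENNReal.ofReal_rpow_of_nonneg (by positivity) (by positivity)]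
      _ = ENNReal.ofReal (2*B * (2 * Real.Gamma (p/2+1)) ^ (1/p:ℝ)) := by
          rw [Real.mul_rpow (by positivity) (by positivity),
              myRpowRpowInv (by positivity) hp0.ne']
  have hreal : 2*A * (2 * Real.Gamma (p+1)) ^ (1/p:ℝ) + 2*B * (2 * Real.Gamma (p/2+1)) ^ (1/p:ℝ)
      ≤ 2 * p * Real.exp (1 / (2 * Real.exp 1)) * Real.exp (-1) *
            (Real.sqrt (8 * Real.pi) * Real.exp (1 / (12 * p))) ^ (1 / p) * A +
          2 * Real.sqrt p * Real.exp (1 / (2 * Real.exp 1)) * Real.exp (-(1 : ℝ) / 2) *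
            (Real.sqrt (2 * Real.pi) * Real.exp (1 / (6 * p))) ^ (1 / p) * B := by
    have i1 := const_ineq1 hp
    have i2 := const_ineq2 hp
    nlinarith [mul_le_mul_of_nonneg_left i1 (show (0:ℝ) ≤ 2*A by positivity),
      mul_le_mul_of_nonneg_left i2 (show (0:ℝ) ≤ 2*B by positivity)]
  calc (∫⁻ ω, ENNReal.ofReal (|Z ω| ^ p) ∂P) ^ (1 / p)
      ≤ (∫⁻ ω, ((F+G) ω) ^ (p:ℝ) ∂P) ^ (1/p:ℝ) :=
        ENNReal.rpow_le_rpow step1 (by positivity)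
    _ ≤ (∫⁻ ω, (F ω) ^ (p:ℝ) ∂P)^(1/p:ℝ) + (∫⁻ ω, (G ω)^(p:ℝ) ∂P)^(1/p:ℝ) := step2
    _ ≤ ENNReal.ofReal (2*A * (2 * Real.Gamma (p+1)) ^ (1/p:ℝ))
        + ENNReal.ofReal (2*B * (2 * Real.Gamma (p/2+1)) ^ (1/p:ℝ)) := add_le_add hFle hGle
    _ = ENNReal.ofReal (2*A * (2 * Real.Gamma (p+1)) ^ (1/p:ℝ)
        + 2*B * (2 * Real.Gamma (p/2+1)) ^ (1/p:ℝ)) := by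
          rw [← ENNReal.ofReal_add (by positivity) (by positivity)]
    _ ≤ _ := ENNReal.ofReal_le_ofReal hreal

end MomentsFromTails

/-- Moment bound from mixed subgaussian–subexponential tails
(slight adjustment of Lemma A.2 of Dirksen). -/
theorem moments_from_mixed_tails
    {Ω : Type*} [MeasurableSpace Ω] (P : Measure Ω) [IsProbabilityMeasure P]
    (Z : Ω → ℝ) (hZ : Measurable Z) (A B : ℝ) (hA : 0 ≤ A) (hB : 0 ≤ B)
    (h : ∀ u > (0 : ℝ),
      P {ω | |Z ω| > A * u + B * Real.sqrt u} ≤ ENNReal.ofReal (2 * Real.exp (-u)))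
    (p : ℝ) (hp : 1 ≤ p) :
    (∫⁻ ω, ENNReal.ofReal (|Z ω| ^ p) ∂P) ^ (1 / p) ≤
      ENNReal.ofReal
        (2 * p * Real.exp (1 / (2 * Real.exp 1)) * Real.exp (-1) *
            (Real.sqrt (8 * Real.pi) * Real.exp (1 / (12 * p))) ^ (1 / p) * A +
          2 * Real.sqrt p * Real.exp (1 / (2 * Real.exp 1)) * Real.exp (-(1 : ℝ) / 2) *
            (Real.sqrt (2 * Real.pi) * Real.exp (1 / (6 * p))) ^ (1 / p) * B) := by
  set c1 : ℝ := 2 * p * Real.exp (1 / (2 * Real.exp 1)) * Real.exp (-1) *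
      (Real.sqrt (8 * Real.pi) * Real.exp (1 / (12 * p))) ^ (1 / p) with hc1
  set c2 : ℝ := 2 * Real.sqrt p * Real.exp (1 / (2 * Real.exp 1)) * Real.exp (-(1 : ℝ) / 2) *
      (Real.sqrt (2 * Real.pi) * Real.exp (1 / (6 * p))) ^ (1 / p) with hc2
  have main : ∀ ε > (0:ℝ),
      (∫⁻ ω, ENNReal.ofReal (|Z ω| ^ p) ∂P) ^ (1 / p) ≤
        ENNReal.ofReal (c1 * (A+ε) + c2 * (B+ε)) := by
    intro ε hε
    have := main_pos P Z hZ (A+ε) (B+ε) (by linarith) (by linarith) ?_ p hp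
    · convert this using 3 <;> ring
    · intro u hu
      refine le_trans (measure_mono ?_) (h u hu)
      intro ω hω
      simp only [Set.mem_setOf_eq] at hω ⊢
      have hs := Real.sqrt_nonneg u
      nlinarith
  have hcont : Tendsto (fun ε : ℝ => ENNReal.ofReal (c1 * (A+ε) + c2 * (B+ε)))
      (nhdsWithin 0 (Set.Ioi 0)) (nhds (ENNReal.ofReal (c1 * A + c2 * B))) := by
    apply Filter.Tendsto.mono_left ?_ nhdsWithin_le_nhds
    have hc : Continuous (fun ε : ℝ => ENNReal.ofReal (c1 * (A+ε) + c2 * (B+ε))) := by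
      apply ENNReal.continuous_ofReal.comp
      continuity
    have := hc.tendsto 0
    simpa using this
  refine le_trans (ge_of_tendsto hcont ?_) (le_of_eq rfl)
  filter_upwards [self_mem_nhdsWithin] with ε hε
  exact main ε hε
end

section
/- Let d ≥ 1, let D ⊆ ℝ^d be a nonempty bounded set with diameter diam(D), let k : ℝ → ℝ be Lipschitz with constant L > 0 and |k(t)| ≤ K_∞ for all t, with K_∞ > 0, let b : ℝ^d → ℝ be bounded with sup_y |b(y)| ≤ M_b, M_b > 0, and let h = (h₁,…,h_d) ∈ (0,∞)^d. Then for every u > 0 there exists a finite set F of functions from ℝ^d to ℝ with card(F) ≤ ∏_{i=1}^d ( ⌈ L · M_b · K_∞^{d−1} · d · diam(D) / (u h_i) ⌉ + 1 ) such that for every x ∈ D there is f ∈ F with sup_{y ∈ ℝ^d} | b(y)·∏_{i=1}^d k((x_i − y_i)/h_i) − f(y) | ≤ u. -/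
private lemma abs_prod_sub_prod_le {ι : Type*} [DecidableEq ι] (s : Finset ι)
    (a c : ι → ℝ) (K : ℝ) (hK : 0 ≤ K)
    (ha : ∀ i, |a i| ≤ K) (hc : ∀ i, |c i| ≤ K) :
    |∏ i ∈ s, a i - ∏ i ∈ s, c i| ≤ (∑ i ∈ s, |a i - c i|) * K ^ (s.card - 1) := by
  induction s using Finset.induction_on with
  | empty => simp
  | @insert j s hj ih =>
    rw [Finset.prod_insert hj, Finset.prod_insert hj, Finset.sum_insert hj,
      Finset.card_insert_of_notMem hj]
    have hQ : |∏ i ∈ s, c i| ≤ K ^ s.card := by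
      rw [Finset.abs_prod]
      calc ∏ i ∈ s, |c i| ≤ ∏ i ∈ s, K :=
            Finset.prod_le_prod (fun i _ => abs_nonneg _) (fun i _ => hc i)
        _ = K ^ s.card := by rw [Finset.prod_const]
    have key : a j * ∏ i ∈ s, a i - c j * ∏ i ∈ s, c i
        = a j * (∏ i ∈ s, a i - ∏ i ∈ s, c i) + (a j - c j) * ∏ i ∈ s, c i := by ring
    rw [key]
    have h1 : |a j * (∏ i ∈ s, a i - ∏ i ∈ s, c i)|
        ≤ (∑ i ∈ s, |a i - c i|) * K ^ s.card := by
      rw [abs_mul]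
      rcases Finset.eq_empty_or_nonempty s with rfl | hs
      · simp
      · have hcard : 1 ≤ s.card := Finset.one_le_card.mpr hs
        calc |a j| * |∏ i ∈ s, a i - ∏ i ∈ s, c i|
            ≤ K * ((∑ i ∈ s, |a i - c i|) * K ^ (s.card - 1)) := by
              apply mul_le_mul (ha j) ih (abs_nonneg _) hK
          _ = (∑ i ∈ s, |a i - c i|) * (K * K ^ (s.card - 1)) := by ring
          _ = (∑ i ∈ s, |a i - c i|) * K ^ s.card := by
              have hc1 : s.card - 1 + 1 = s.card := by omega
              rw [← pow_succ', hc1]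
    have h2 : |(a j - c j) * ∏ i ∈ s, c i| ≤ |a j - c j| * K ^ s.card := by
      rw [abs_mul]
      exact mul_le_mul_of_nonneg_left hQ (abs_nonneg _)
    calc |a j * (∏ i ∈ s, a i - ∏ i ∈ s, c i) + (a j - c j) * ∏ i ∈ s, c i|
        ≤ |a j * (∏ i ∈ s, a i - ∏ i ∈ s, c i)| + |(a j - c j) * ∏ i ∈ s, c i| :=
          abs_add_le _ _
      _ ≤ (∑ i ∈ s, |a i - c i|) * K ^ s.card + |a j - c j| * K ^ s.card := by
          exact add_le_add h1 h2
      _ = (|a j - c j| + ∑ i ∈ s, |a i - c i|) * K ^ (s.card + 1 - 1) := by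
          rw [Nat.add_sub_cancel]; ring

/-- Sup-norm covering bound for the weighted kernel class `𝒢_h b`. -/
theorem covering_bound_weighted_kernel_class
    {d : ℕ} (hd : 1 ≤ d)
    (D : Set (EuclideanSpace ℝ (Fin d))) (hD : D.Nonempty) (hDb : Bornology.IsBounded D)
    (k : ℝ → ℝ) (L Kinf : ℝ) (hL : 0 < L) (hK : 0 < Kinf)
    (hLip : ∀ s t, |k s - k t| ≤ L * |s - t|) (hkb : ∀ t, |k t| ≤ Kinf)
    (b : EuclideanSpace ℝ (Fin d) → ℝ) (Mb : ℝ) (hMb : 0 < Mb) (hb : ∀ y, |b y| ≤ Mb)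
    (h : Fin d → ℝ) (hh : ∀ i, 0 < h i) (u : ℝ) (hu : 0 < u) :
    ∃ F : Finset (EuclideanSpace ℝ (Fin d) → ℝ),
      F.card ≤
          ∏ i : Fin d,
            (Nat.ceil (L * Mb * Kinf ^ (d - 1) * d * Metric.diam D / (u * h i)) + 1) ∧
        ∀ x ∈ D, ∃ f ∈ F, ∀ y,
          |b y * (∏ i, k ((x i - y i) / h i)) - f y| ≤ u := by
  obtain ⟨x₀, hx₀⟩ := hD
  have hdpos : (0 : ℝ) < d := by exact_mod_cast Nat.lt_of_lt_of_le Nat.zero_lt_one hd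
  set C : ℝ := L * Mb * Kinf ^ (d - 1) * d with hCdef
  have hC : 0 < C := by positivity
  set ε : Fin d → ℝ := fun i => u * h i / C with hεdef
  have hε : ∀ i, 0 < ε i := fun i => by
    have := hh i; positivity
  set N : Fin d → ℕ := fun i => Nat.ceil (C * Metric.diam D / (u * h i)) with hNdef
  -- coordinate distance bound
  have hcoord : ∀ x y : EuclideanSpace ℝ (Fin d), ∀ i, |x i - y i| ≤ dist x y := by
    intro x y i
    rw [EuclideanSpace.dist_eq]
    have h1 : |x i - y i| = Real.sqrt (|x i - y i| ^ 2) := by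
      rw [Real.sqrt_sq (abs_nonneg _)]
    rw [h1]
    apply Real.sqrt_le_sqrt
    rw [sq_abs]
    simp only [Real.dist_eq, sq_abs]
    exact Finset.single_le_sum (f := fun j => (x j - y j) ^ 2)
      (fun j _ => sq_nonneg _) (Finset.mem_univ i)
  set m : Fin d → ℝ := fun i => sInf ((fun x : EuclideanSpace ℝ (Fin d) => x i) '' D)
    with hmdef
  have hbdd : ∀ i, BddBelow ((fun x : EuclideanSpace ℝ (Fin d) => x i) '' D) := by
    intro i
    refine ⟨x₀ i - Metric.diam D, ?_⟩
    rintro z ⟨x, hx, rfl⟩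
    have h1 : |x₀ i - x i| ≤ Metric.diam D :=
      le_trans (hcoord x₀ x i) (Metric.dist_le_diam_of_mem hDb hx₀ hx)
    have := abs_le.mp h1
    linarith [this.2]
  have hm_le : ∀ x ∈ D, ∀ i, m i ≤ x i := by
    intro x hx i
    exact csInf_le (hbdd i) (Set.mem_image_of_mem _ hx)
  have hle_m : ∀ x ∈ D, ∀ i, x i - m i ≤ Metric.diam D := by
    intro x hx i
    have : x i - Metric.diam D ≤ m i := by
      show x i - Metric.diam D ≤ sInf ((fun x : EuclideanSpace ℝ (Fin d) => x i) '' D)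
      have hne : ((fun x : EuclideanSpace ℝ (Fin d) => x i) '' D).Nonempty :=
        ⟨x i, x, hx, rfl⟩
      apply le_csInf hne
      rintro z ⟨x', hx', rfl⟩
      have h1 : |x i - x' i| ≤ Metric.diam D :=
        le_trans (hcoord x x' i) (Metric.dist_le_diam_of_mem hDb hx hx')
      have := abs_le.mp h1
      linarith [this.2]
    linarith
  -- key approximation lemma
  have hcard : (Finset.univ : Finset (Fin d)).card = d := by simp
  have hkey : ∀ (x z : Fin d → ℝ), (∀ i, |x i - z i| ≤ ε i) →
      ∀ y : EuclideanSpace ℝ (Fin d),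
      |b y * (∏ i, k ((x i - y i) / h i)) - b y * (∏ i, k ((z i - y i) / h i))| ≤ u := by
    intro x z hxz y
    rw [← mul_sub, abs_mul]
    have hprod : |(∏ i, k ((x i - y i) / h i)) - ∏ i, k ((z i - y i) / h i)|
        ≤ (∑ i : Fin d, |k ((x i - y i) / h i) - k ((z i - y i) / h i)|)
          * Kinf ^ (d - 1) := by
      have := abs_prod_sub_prod_le Finset.univ
        (fun i => k ((x i - y i) / h i)) (fun i => k ((z i - y i) / h i))
        Kinf hK.le (fun i => hkb _) (fun i => hkb _)
      rwa [hcard] at this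
    have hsum : (∑ i : Fin d, |k ((x i - y i) / h i) - k ((z i - y i) / h i)|)
        ≤ d * (L * u / C) := by
      rw [show (d : ℝ) * (L * u / C) = ∑ _i : Fin d, L * u / C by
        rw [Finset.sum_const]; simp [mul_comm]]
      apply Finset.sum_le_sum
      intro i _
      calc |k ((x i - y i) / h i) - k ((z i - y i) / h i)|
          ≤ L * |(x i - y i) / h i - (z i - y i) / h i| := hLip _ _
        _ = L * (|x i - z i| / h i) := by
            rw [div_sub_div_same, show x i - y i - (z i - y i) = x i - z i from by ring,
              abs_div, abs_of_pos (hh i)]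
        _ ≤ L * (ε i / h i) := by
            exact mul_le_mul_of_nonneg_left
              ((div_le_div_iff_of_pos_right (hh i)).mpr (hxz i)) hL.le
        _ = L * u / C := by
            rw [hεdef]
            have := (hh i).ne'
            field_simp
    calc |b y| * |(∏ i, k ((x i - y i) / h i)) - ∏ i, k ((z i - y i) / h i)|
        ≤ Mb * ((d * (L * u / C)) * Kinf ^ (d - 1)) := by
          apply mul_le_mul (hb y) _ (abs_nonneg _) hMb.le
          calc |(∏ i, k ((x i - y i) / h i)) - ∏ i, k ((z i - y i) / h i)|
              ≤ (∑ i : Fin d, |k ((x i - y i) / h i) - k ((z i - y i) / h i)|)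
                * Kinf ^ (d - 1) := hprod
            _ ≤ (d * (L * u / C)) * Kinf ^ (d - 1) := by
                apply mul_le_mul_of_nonneg_right hsum (by positivity)
      _ = u := by
          rw [hCdef]
          field_simp
  -- the grid
  classical
  set grid : (∀ i : Fin d, Fin (N i + 1)) → (EuclideanSpace ℝ (Fin d) → ℝ) :=
    fun j y => b y * ∏ i, k ((m i + (j i : ℝ) * ε i - y i) / h i) with hgrid
  refine ⟨Finset.image grid Finset.univ, ?_, ?_⟩
  · calc (Finset.image grid Finset.univ).card
        ≤ (Finset.univ : Finset (∀ i : Fin d, Fin (N i + 1))).card :=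
          Finset.card_image_le
      _ = ∏ i : Fin d, (N i + 1) := by
          rw [Finset.card_univ, Fintype.card_pi]
          simp
      _ = ∏ i : Fin d,
            (Nat.ceil (L * Mb * Kinf ^ (d - 1) * d * Metric.diam D / (u * h i)) + 1) := by
          apply Finset.prod_congr rfl
          intro i _
          rw [hNdef, hCdef]
  · intro x hx
    have hNle : ∀ i, Nat.floor ((x i - m i) / ε i) < N i + 1 := by
      intro i
      have h1 : (x i - m i) / ε i ≤ Metric.diam D / ε i :=
        (div_le_div_iff_of_pos_right (hε i)).mpr (hle_m x hx i)
      have h2 : Metric.diam D / ε i = C * Metric.diam D / (u * h i) := by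
        rw [hεdef]
        have := (hh i).ne'
        field_simp
      calc Nat.floor ((x i - m i) / ε i) ≤ Nat.floor (Metric.diam D / ε i) :=
            Nat.floor_mono h1
        _ ≤ Nat.ceil (Metric.diam D / ε i) := Nat.floor_le_ceil _
        _ = N i := by rw [hNdef, h2]
        _ < N i + 1 := Nat.lt_succ_self _
    refine ⟨grid (fun i => ⟨Nat.floor ((x i - m i) / ε i), hNle i⟩), ?_, ?_⟩
    · exact Finset.mem_image_of_mem grid (Finset.mem_univ _)
    · intro y
      apply hkey (fun i => x i)
        (fun i => m i + (Nat.floor ((x i - m i) / ε i) : ℝ) * ε i)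
      intro i
      have ht0 : 0 ≤ x i - m i := by linarith [hm_le x hx i]
      have hq0 : 0 ≤ (x i - m i) / ε i := div_nonneg ht0 (hε i).le
      have hfl : (Nat.floor ((x i - m i) / ε i) : ℝ) ≤ (x i - m i) / ε i :=
        Nat.floor_le hq0
      have hfl2 : (x i - m i) / ε i < Nat.floor ((x i - m i) / ε i) + 1 :=
        Nat.lt_floor_add_one _
      have hlow : (Nat.floor ((x i - m i) / ε i) : ℝ) * ε i ≤ x i - m i := by
        have := mul_le_mul_of_nonneg_right hfl (hε i).le
        rwa [div_mul_cancel₀ _ (hε i).ne'] at this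
      have hhigh : x i - m i < ((Nat.floor ((x i - m i) / ε i) : ℝ) + 1) * ε i := by
        have := mul_lt_mul_of_pos_right hfl2 (hε i)
        rwa [div_mul_cancel₀ _ (hε i).ne'] at this
      rw [abs_le]
      constructor
      · nlinarith [hε i]
      · nlinarith [hε i]
end

section
/- Let H be a nonempty finite set, D a nonempty set, and let f : D → ℝ, (b_h)_{h ∈ H} and (b_{h,η})_{(h,η) ∈ H×H} be bounded real-valued functions on D satisfying the symmetry b_{h,η} = b_{η,h} for all h, η ∈ H. Let A : H → [0,∞), and define Υ(h) := max_{η ∈ H} ( sup_{x ∈ D} |b_{h,η}(x) − b_η(x)| − A(η) )₊ for h ∈ H, where (·)₊ denotes the positive part. Let ĥ ∈ H be any minimiser of h ↦ Υ(h) + A(h) over H. Then for every h ∈ H, sup_{x ∈ D} |b_ĥ(x) − f(x)| ≤ 2(Υ(h) + A(h)) + sup_{x ∈ D} |b_h(x) − f(x)|. -/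
/-- Deterministic oracle inequality of the Goldenshluger–Lepski bandwidth selection. -/
theorem goldenshluger_lepski_oracle
    {H D : Type*} [Fintype H] [Nonempty H] [Nonempty D]
    (f : D → ℝ) (b : H → D → ℝ) (bb : H → H → D → ℝ)
    (hf : ∃ C, ∀ x, |f x| ≤ C)
    (hb : ∀ h, ∃ C, ∀ x, |b h x| ≤ C)
    (hbb : ∀ h η, ∃ C, ∀ x, |bb h η x| ≤ C)
    (hsymm : ∀ h η, bb h η = bb η h)
    (A : H → ℝ) (hA : ∀ h, 0 ≤ A h)
    (Υ : H → ℝ)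
    (hΥ : ∀ h, Υ h = ⨆ η, max ((⨆ x, |bb h η x - b η x|) - A η) 0)
    (hhat : H) (hmin : ∀ h, Υ hhat + A hhat ≤ Υ h + A h) :
    ∀ h, (⨆ x, |b hhat x - f x|) ≤ 2 * (Υ h + A h) + ⨆ x, |b h x - f x| := by
  intro h
  obtain ⟨Cf, hCf⟩ := hf
  -- boundedness of the sup over x of |bb h η x - b η x|
  have hbdd1 : ∀ h' η, BddAbove (Set.range fun x => |bb h' η x - b η x|) := by
    intro h' η
    obtain ⟨C1, hC1⟩ := hbb h' η
    obtain ⟨C2, hC2⟩ := hb η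
    refine ⟨C1 + C2, ?_⟩
    rintro _ ⟨x, rfl⟩
    exact (abs_sub _ _).trans (add_le_add (hC1 x) (hC2 x))
  have hbdd2 : ∀ h', BddAbove (Set.range fun x => |b h' x - f x|) := by
    intro h'
    obtain ⟨C1, hC1⟩ := hb h'
    refine ⟨C1 + Cf, ?_⟩
    rintro _ ⟨x, rfl⟩
    exact (abs_sub _ _).trans (add_le_add (hC1 x) (hCf x))
  -- key bound: pointwise |bb h' η x - b η x| ≤ Υ h' + A η
  have key : ∀ h' η x, |bb h' η x - b η x| ≤ Υ h' + A η := by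
    intro h' η x
    have h1 : |bb h' η x - b η x| ≤ ⨆ x, |bb h' η x - b η x| :=
      le_ciSup (hbdd1 h' η) x
    have h2 : max ((⨆ x, |bb h' η x - b η x|) - A η) 0 ≤ Υ h' := by
      rw [hΥ h']
      exact le_ciSup (f := fun η => max ((⨆ x, |bb h' η x - b η x|) - A η) 0)
        (Set.Finite.bddAbove (Set.finite_range _)) η
    have h3 : (⨆ x, |bb h' η x - b η x|) - A η ≤ Υ h' :=
      (le_max_left _ _).trans h2
    linarith
  have hΥpos : ∀ h', 0 ≤ Υ h' := by
    intro h'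
    rw [hΥ h']
    exact le_ciSup_of_le (Set.Finite.bddAbove (Set.finite_range _))
      (Classical.arbitrary H) (le_max_right _ 0)
  -- pointwise decomposition
  have main : ∀ x, |b hhat x - f x| ≤ 2 * (Υ h + A h) + ⨆ x, |b h x - f x| := by
    intro x
    have t1 : |b hhat x - f x| ≤
        |bb h hhat x - b hhat x| + |bb hhat h x - b h x| + |b h x - f x| := by
      have hs : bb h hhat x = bb hhat h x := by rw [hsymm h hhat]
      have := abs_sub_le (b hhat x) (bb h hhat x) (f x)
      have := abs_sub_le (bb h hhat x) (b h x) (f x)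
      calc |b hhat x - f x| ≤ |b hhat x - bb h hhat x| + |bb h hhat x - f x| :=
            abs_sub_le _ _ _
        _ ≤ |b hhat x - bb h hhat x| + (|bb h hhat x - b h x| + |b h x - f x|) :=
            by linarith [abs_sub_le (bb h hhat x) (b h x) (f x)]
        _ = |bb h hhat x - b hhat x| + |bb hhat h x - b h x| + |b h x - f x| := by
            rw [abs_sub_comm, hs]; ring
    have t2 : |bb h hhat x - b hhat x| ≤ Υ h + A hhat := key h hhat x
    have t3 : |bb hhat h x - b h x| ≤ Υ hhat + A h := key hhat h x
    have t4 : |b h x - f x| ≤ ⨆ x, |b h x - f x| := le_ciSup (hbdd2 h) x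
    have t5 : Υ hhat + A hhat ≤ Υ h + A h := hmin h
    linarith [hΥpos h, hA h]
  exact ciSup_le main
end
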